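/- arXiv:2403.17142 — 3 statements merged into one kernel-verified Lean document; each statement's English description precedes it below -/
import Mathlib

section
/- If f : ℝⁿ → ℝ satisfies |f̂(ω)|(1+‖ω‖^k) ≤ ρ for all ω with k ≥ n+3, then f is Lipschitz with constant at most 4π A_{n-1} ρ and ‖f‖_∞ ≤ 2ρ A_{n-1}. -/
open MeasureTheory Real Set
open scoped FourierTransform RealInnerProductSpace

lemma aux_norm_exp_mul_I_sub_one (θ : ℝ) :
    ‖Complex.exp (θ * Complex.I) - 1‖ ≤ |θ| := by
  set z := Complex.exp (θ * Complex.I) - 1 with hz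
  have h1 : Complex.exp (θ * Complex.I) = Real.cos θ + Real.sin θ * Complex.I := by
    rw [Complex.exp_mul_I]
    norm_cast
  have hre : z.re = Real.cos θ - 1 := by simp [hz, h1, Complex.cos_ofReal_re, Complex.sin_ofReal_re]
  have him : z.im = Real.sin θ := by simp [hz, h1, Complex.cos_ofReal_re, Complex.sin_ofReal_re]
  have hsq : ‖z‖ ^ 2 = (Real.cos θ - 1) ^ 2 + Real.sin θ ^ 2 := by
    rw [Complex.sq_norm, Complex.normSq_apply, hre, him]
    ring
  have hcos := Real.one_sub_sq_div_two_le_cos (x := θ)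
  have hpyth := Real.sin_sq_add_cos_sq θ
  calc ‖z‖ = √(‖z‖ ^ 2) := (Real.sqrt_sq (norm_nonneg z)).symm
    _ ≤ √(θ ^ 2) := Real.sqrt_le_sqrt (by nlinarith)
    _ = |θ| := Real.sqrt_sq_eq_abs θ

lemma aux_norm_char_sub (a b : ℝ) :
    ‖(Real.fourierChar a : ℂ) - Real.fourierChar b‖ ≤ 2 * π * |a - b| := by
  have h1 : (Real.fourierChar a : ℂ) - Real.fourierChar b
      = Complex.exp ((2 * π * b : ℝ) * Complex.I) *
        (Complex.exp ((2 * π * (a - b) : ℝ) * Complex.I) - 1) := by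
    rw [Real.fourierChar_apply, Real.fourierChar_apply, mul_sub, mul_one,
      ← Complex.exp_add]
    push_cast
    ring_nf
  rw [h1, norm_mul, Complex.norm_exp_ofReal_mul_I, one_mul]
  calc ‖Complex.exp ((2 * π * (a - b) : ℝ) * Complex.I) - 1‖ ≤ |2 * π * (a - b)| :=
        aux_norm_exp_mul_I_sub_one _
    _ = 2 * π * |a - b| := by
        rw [abs_mul, abs_of_nonneg (by positivity : (0:ℝ) ≤ 2 * π)]

open MeasureTheory Real Set

lemma aux_radial (j k : ℕ) (hjk : j + 2 ≤ k) :
    IntegrableOn (fun y : ℝ => y ^ j / (1 + y ^ k)) (Ioi 0) ∧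
    ∫ y in Ioi (0:ℝ), y ^ j / (1 + y ^ k) ≤ 2 := by
  set F : ℝ → ℝ := fun y => y ^ j / (1 + y ^ k) with hF
  have hmeas : AEStronglyMeasurable F volume :=
    ((measurable_id.pow_const j).div
      (measurable_const.add (measurable_id.pow_const k))).aestronglyMeasurable
  -- on (0,1]
  have hbd1 : ∀ y ∈ Ioc (0:ℝ) 1, F y ≤ 1 := by
    intro y hy
    have h1 : y ^ j ≤ 1 := pow_le_one₀ hy.1.le hy.2
    have h2 : (1:ℝ) ≤ 1 + y ^ k := by nlinarith [pow_nonneg hy.1.le k]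
    calc F y ≤ y ^ j / 1 := by
          apply div_le_div_of_nonneg_left (pow_nonneg hy.1.le j) one_pos h2
      _ = y ^ j := div_one _
      _ ≤ 1 := h1
  have hFnn : ∀ y : ℝ, 0 ≤ y → 0 ≤ F y := by
    intro y hy
    have : (0:ℝ) < 1 + y ^ k := by nlinarith [pow_nonneg hy k]
    positivity
  have hint1 : IntegrableOn F (Ioc 0 1) := by
    apply Measure.integrableOn_of_bounded (M := 1)
    · simp [Real.volume_Ioc]
    · exact hmeas
    · filter_upwards [ae_restrict_mem measurableSet_Ioc] with y hy
      rw [Real.norm_of_nonneg (hFnn y hy.1.le)]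
      exact hbd1 y hy
  -- on (1,∞)
  have hbd2 : ∀ y ∈ Ioi (1:ℝ), F y ≤ y ^ (-2 : ℝ) := by
    intro y hy
    rw [mem_Ioi] at hy
    have hy0 : (0:ℝ) < y := lt_trans one_pos hy
    have h1 : y ^ (j + 2) ≤ y ^ k := pow_le_pow_right₀ hy.le hjk
    have h2 : (0:ℝ) < y ^ j * y ^ 2 := by positivity
    have h3 : y ^ j * y ^ 2 ≤ 1 + y ^ k := by
      rw [← pow_add]
      nlinarith
    have : F y ≤ y ^ j / (y ^ j * y ^ 2) :=
      div_le_div_of_nonneg_left (pow_nonneg hy0.le j) h2 h3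
    calc F y ≤ y ^ j / (y ^ j * y ^ 2) := this
      _ = (y ^ 2)⁻¹ := by
          field_simp
      _ = y ^ (-2 : ℝ) := by
          rw [← Real.rpow_natCast y 2, ← Real.rpow_neg hy0.le]
          norm_num
  have hrint : IntegrableOn (fun y : ℝ => y ^ (-2:ℝ)) (Ioi 1) :=
    integrableOn_Ioi_rpow_of_lt (by norm_num) one_pos
  have hint2 : IntegrableOn F (Ioi 1) := by
    apply hrint.mono' hmeas.restrict
    filter_upwards [ae_restrict_mem measurableSet_Ioi] with y hy
    rw [Real.norm_of_nonneg (hFnn y (lt_trans one_pos hy).le)]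
    exact hbd2 y hy
  have hunion : Ioc (0:ℝ) 1 ∪ Ioi 1 = Ioi 0 := Ioc_union_Ioi_eq_Ioi zero_le_one
  have hdisj : Disjoint (Ioc (0:ℝ) 1) (Ioi 1) := by
    simp [Set.disjoint_left]
  have hintall : IntegrableOn F (Ioi 0) := by
    rw [← hunion]; exact hint1.union hint2
  refine ⟨hintall, ?_⟩
  have e1 : ∫ y in Ioc (0:ℝ) 1, F y ≤ 1 := by
    calc ∫ y in Ioc (0:ℝ) 1, F y ≤ ∫ _ in Ioc (0:ℝ) 1, (1:ℝ) := by
          apply setIntegral_mono_on hint1 (integrableOn_const (by simp [Real.volume_Ioc]))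
            measurableSet_Ioc hbd1
      _ = 1 := by simp [Real.volume_Ioc]
  have e2 : ∫ y in Ioi (1:ℝ), F y ≤ 1 := by
    calc ∫ y in Ioi (1:ℝ), F y ≤ ∫ y in Ioi (1:ℝ), y ^ (-2:ℝ) :=
          setIntegral_mono_on hint2 hrint measurableSet_Ioi hbd2
      _ = 1 := by
          rw [integral_Ioi_rpow_of_lt (by norm_num) one_pos]
          norm_num
  calc ∫ y in Ioi (0:ℝ), F y = (∫ y in Ioc (0:ℝ) 1, F y) + ∫ y in Ioi (1:ℝ), F y := by
        rw [← hunion, setIntegral_union hdisj measurableSet_Ioi hint1 hint2]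
    _ ≤ 2 := by linarith
-- area constant computation
lemma aux_area (n : ℕ) (hn : 1 ≤ n) :
    (n : ℝ) * (volume (Metric.ball (0 : EuclideanSpace ℝ (Fin n)) 1)).toReal
      = 2 * π ^ ((n : ℝ) / 2) / Real.Gamma (n / 2) := by
  haveI : Nonempty (Fin n) := Fin.pos_iff_nonempty.mp hn
  have hG : 0 < Real.Gamma ((n:ℝ) / 2) :=
    Real.Gamma_pos_of_pos (by positivity)
  have hG1 : 0 < Real.Gamma ((n:ℝ) / 2 + 1) :=
    Real.Gamma_pos_of_pos (by positivity)
  have hb : volume (Metric.ball (0 : EuclideanSpace ℝ (Fin n)) 1)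
      = ENNReal.ofReal (Real.sqrt π ^ n / Real.Gamma (n / 2 + 1)) := by
    rw [EuclideanSpace.volume_ball]
    simp [Fintype.card_fin]
  rw [hb, ENNReal.toReal_ofReal (by positivity)]
  have hsq : (Real.sqrt π) ^ n = π ^ ((n:ℝ)/2) := by
    rw [Real.sqrt_eq_rpow, ← Real.rpow_natCast (π ^ ((1:ℝ)/2)) n,
      ← Real.rpow_mul pi_nonneg]
    norm_num
    rw [mul_comm, mul_one_div]
  have hGa : Real.Gamma ((n:ℝ)/2 + 1) = ((n:ℝ)/2) * Real.Gamma ((n:ℝ)/2) := by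
    apply Real.Gamma_add_one
    positivity
  rw [hsq, hGa]
  have hn0 : (n:ℝ) ≠ 0 := by positivity
  field_simp

lemma aux_euclid (n m k : ℕ) (hn : 1 ≤ n) (hk : n + m + 1 ≤ k) :
    Integrable (fun ω : EuclideanSpace ℝ (Fin n) => ‖ω‖ ^ m / (1 + ‖ω‖ ^ k)) ∧
    ∫ ω : EuclideanSpace ℝ (Fin n), ‖ω‖ ^ m / (1 + ‖ω‖ ^ k) ≤
      2 * (2 * π ^ ((n : ℝ) / 2) / Real.Gamma (n / 2)) := by
  have hfr : Module.finrank ℝ (EuclideanSpace ℝ (Fin n)) = n := by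
    simp [finrank_euclideanSpace]
  haveI : Nontrivial (EuclideanSpace ℝ (Fin n)) := by
    apply Module.nontrivial_of_finrank_pos (R := ℝ)
    rw [hfr]; omega
  have hden : ∀ t : ℝ, 0 ≤ t → (0:ℝ) < 1 + t ^ k := by
    intro t ht; nlinarith [pow_nonneg ht k]
  -- integrability via Japanese bracket
  have hmk : m ≤ k := by omega
  have hcomp : ∀ ω : EuclideanSpace ℝ (Fin n),
      ‖ω‖ ^ m / (1 + ‖ω‖ ^ k) ≤ 2 ^ k * (1 + ‖ω‖) ^ (-((k - m : ℕ) : ℝ)) := by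
    intro ω
    set t : ℝ := ‖ω‖ with hts
    have ht : 0 ≤ t := norm_nonneg ω
    have h1 : t ^ m ≤ (1 + t) ^ m := pow_le_pow_left₀ ht (by linarith) m
    have h2 : (1 + t) ^ k ≤ 2 ^ k * (1 + t ^ k) := by
      rcases le_total t 1 with h | h
      · calc (1 + t) ^ k ≤ 2 ^ k := pow_le_pow_left₀ (by linarith) (by linarith) k
          _ ≤ 2 ^ k * (1 + t ^ k) := le_mul_of_one_le_right (by positivity)
              (by nlinarith [pow_nonneg ht k])
      · calc (1 + t) ^ k ≤ (2 * t) ^ k := pow_le_pow_left₀ (by linarith) (by linarith) k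
          _ = 2 ^ k * t ^ k := mul_pow 2 t k
          _ ≤ 2 ^ k * (1 + t ^ k) := by nlinarith [pow_pos (show (0:ℝ) < 2 by norm_num) k]
    have h3 : t ^ m * (1 + t) ^ (k - m) ≤ 2 ^ k * (1 + t ^ k) := by
      calc t ^ m * (1 + t) ^ (k - m) ≤ (1 + t) ^ m * (1 + t) ^ (k - m) :=
            mul_le_mul_of_nonneg_right h1 (by positivity)
        _ = (1 + t) ^ k := by rw [← pow_add]; congr 1; omega
        _ ≤ 2 ^ k * (1 + t ^ k) := h2
    have hrw : (1 + t) ^ (-((k - m : ℕ) : ℝ)) = ((1 + t) ^ (k - m : ℕ))⁻¹ := by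
      rw [Real.rpow_neg (by linarith), Real.rpow_natCast]
    rw [hrw, ← div_eq_mul_inv, div_le_div_iff₀ (hden t ht) (by positivity)]
    exact h3
  have hInt : Integrable (fun ω : EuclideanSpace ℝ (Fin n) => ‖ω‖ ^ m / (1 + ‖ω‖ ^ k)) := by
    have hmaj : Integrable (fun ω : EuclideanSpace ℝ (Fin n) =>
        (2:ℝ) ^ k * (1 + ‖ω‖) ^ (-((k - m : ℕ) : ℝ))) := by
      apply Integrable.const_mul
      apply integrable_one_add_norm
      rw [hfr]
      exact_mod_cast (by omega : n < k - m)
    apply hmaj.mono'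
    · apply Continuous.aestronglyMeasurable
      apply Continuous.div
      · exact continuous_norm.pow m
      · exact continuous_const.add (continuous_norm.pow k)
      · intro ω; exact ne_of_gt (hden _ (norm_nonneg _))
    · filter_upwards with ω
      have h0 : (0:ℝ) < 1 + ‖ω‖ ^ k := hden _ (norm_nonneg _)
      rw [Real.norm_of_nonneg (by positivity)]
      exact hcomp ω
  refine ⟨hInt, ?_⟩
  have hpolar := MeasureTheory.integral_fun_norm_addHaar
    (volume : Measure (EuclideanSpace ℝ (Fin n))) (fun y : ℝ => y ^ m / (1 + y ^ k))
  rw [hfr] at hpolar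
  have hrad := aux_radial (n - 1 + m) k (by omega)
  have hR0 : 0 ≤ ∫ y in Ioi (0:ℝ), y ^ (n - 1 + m) / (1 + y ^ k) := by
    apply setIntegral_nonneg measurableSet_Ioi
    intro y hy
    have hy' : (0:ℝ) < y := hy
    exact div_nonneg (pow_nonneg hy'.le _) (hden y hy'.le).le
  have hEq : ∫ y in Ioi (0:ℝ), y ^ (n - 1) • ((fun y : ℝ => y ^ m / (1 + y ^ k)) y)
      = ∫ y in Ioi (0:ℝ), y ^ (n - 1 + m) / (1 + y ^ k) := by
    congr 1
    funext y
    simp only [smul_eq_mul]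
    rw [pow_add]
    ring
  set V : ℝ := (volume (Metric.ball (0 : EuclideanSpace ℝ (Fin n)) 1)).toReal with hV
  have hV0 : 0 ≤ V := ENNReal.toReal_nonneg
  calc ∫ ω : EuclideanSpace ℝ (Fin n), ‖ω‖ ^ m / (1 + ‖ω‖ ^ k)
      = (n : ℝ) * V * ∫ y in Ioi (0:ℝ), y ^ (n - 1 + m) / (1 + y ^ k) := by
        rw [show (∫ ω : EuclideanSpace ℝ (Fin n), ‖ω‖ ^ m / (1 + ‖ω‖ ^ k))
          = ∫ x : EuclideanSpace ℝ (Fin n), (fun y : ℝ => y ^ m / (1 + y ^ k)) ‖x‖ from rfl,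
          hpolar, hEq]
        simp only [nsmul_eq_mul, smul_eq_mul]
        rw [hV, measureReal_def]
        ring
    _ ≤ (n : ℝ) * V * 2 :=
        mul_le_mul_of_nonneg_left hrad.2 (by positivity)
    _ = 2 * (2 * π ^ ((n : ℝ) / 2) / Real.Gamma (n / 2)) := by
        rw [← aux_area n hn]
        ring

/-- If the Fourier transform of a continuous integrable real-valued `f` satisfies
`|f̂(ω)|(1 + ‖ω‖^k) ≤ ρ` with `k ≥ n + 3`, then `f` is `4π A_{n-1} ρ`-Lipschitz and
`‖f‖_∞ ≤ 2 ρ A_{n-1}`, where `A_{n-1} = 2π^{n/2}/Γ(n/2)`. -/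
theorem lipschitz_and_sup_bound_of_fourier_decay
    (n k : ℕ) (hn : 1 ≤ n) (hk : n + 3 ≤ k) (ρ : ℝ) (hρ : 0 < ρ)
    (f : EuclideanSpace ℝ (Fin n) → ℝ)
    (hcont : Continuous f) (hint : Integrable f)
    (hf : ∀ ω, ‖VectorFourier.fourierIntegral Real.fourierChar volume
      (innerₗ (EuclideanSpace ℝ (Fin n))) (fun x => (f x : ℂ)) ω‖ * (1 + ‖ω‖ ^ k) ≤ ρ) :
    LipschitzWith (Real.toNNReal
        (4 * π * (2 * π ^ ((n : ℝ) / 2) / Real.Gamma (n / 2)) * ρ)) f ∧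
      ∀ x, |f x| ≤ 2 * ρ * (2 * π ^ ((n : ℝ) / 2) / Real.Gamma (n / 2)) := by
  set A : ℝ := 2 * π ^ ((n : ℝ) / 2) / Real.Gamma (n / 2) with hA
  have hG : 0 < Real.Gamma ((n:ℝ) / 2) := by
    apply Real.Gamma_pos_of_pos
    have : (0:ℝ) < n := by exact_mod_cast hn
    positivity
  have hA0 : 0 < A := by
    rw [hA]
    exact div_pos (by positivity) hG
  set fc : EuclideanSpace ℝ (Fin n) → ℂ := fun x => (f x : ℂ) with hfc
  have hfc_cont : Continuous fc := Complex.continuous_ofReal.comp hcont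
  have hfc_int : Integrable fc := hint.ofReal
  set g : EuclideanSpace ℝ (Fin n) → ℂ := 𝓕 fc with hg
  have hg_bound : ∀ ω, ‖g ω‖ ≤ ρ / (1 + ‖ω‖ ^ k) := by
    intro ω
    have hden : (0:ℝ) < 1 + ‖ω‖ ^ k := by positivity
    rw [le_div_iff₀ hden]
    exact hf ω
  have hg_cont : Continuous g :=
    VectorFourier.fourierIntegral_continuous Real.continuous_fourierChar
      (by exact continuous_inner) hfc_int
  have h0 := aux_euclid n 0 k hn (by omega)
  have h1 := aux_euclid n 1 k hn (by omega)
  have hg_int : Integrable g := by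
    apply (h0.1.const_mul ρ).mono' hg_cont.aestronglyMeasurable
    filter_upwards with ω
    simpa [pow_zero, mul_one_div, div_eq_mul_inv] using hg_bound ω
  have hinv : ∀ x, (f x : ℂ) = ∫ ω, (Real.fourierChar ⟪ω, x⟫ : ℂ) * g ω := by
    intro x
    have hi := hfc_cont.fourierInv_fourier_eq hfc_int hg_int
    calc (f x : ℂ) = 𝓕⁻ g x := (congrFun hi x).symm
      _ = ∫ ω, (Real.fourierChar ⟪ω, x⟫ : ℂ) * g ω := by
          rw [Real.fourierInv_eq]
          simp_rw [Circle.smul_def, smul_eq_mul]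
  have hsmul_int : ∀ x, Integrable fun ω => (Real.fourierChar ⟪ω, x⟫ : ℂ) * g ω := by
    intro x
    apply hg_int.bdd_mul (c := 1)
    · exact (continuous_subtype_val.comp (Real.continuous_fourierChar.comp
        (continuous_id.inner continuous_const))).aestronglyMeasurable
    · exact Filter.Eventually.of_forall (fun ω => (Circle.norm_coe _).le)
  refine ⟨?_, ?_⟩
  · -- Lipschitz
    apply LipschitzWith.of_dist_le_mul
    intro x y
    have hd0 : (0:ℝ) ≤ dist x y := dist_nonneg
    have hsub : (f x : ℂ) - (f y : ℂ)
        = ∫ ω, ((Real.fourierChar ⟪ω, x⟫ : ℂ) - Real.fourierChar ⟪ω, y⟫) * g ω := by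
      rw [hinv x, hinv y, ← integral_sub (hsmul_int x) (hsmul_int y)]
      congr 1
      funext ω
      ring
    have hbd : ‖(f x : ℂ) - (f y : ℂ)‖
        ≤ ∫ ω : EuclideanSpace ℝ (Fin n), (2 * π * dist x y) * (ρ * (‖ω‖ ^ 1 / (1 + ‖ω‖ ^ k))) := by
      rw [hsub]
      apply norm_integral_le_of_norm_le ((h1.1.const_mul ρ).const_mul (2 * π * dist x y))
      filter_upwards with ω
      rw [norm_mul]
      have hden : (0:ℝ) < 1 + ‖ω‖ ^ k := by positivity
      have hdiff : ‖(Real.fourierChar ⟪ω, x⟫ : ℂ) - Real.fourierChar ⟪ω, y⟫‖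
          ≤ 2 * π * (‖ω‖ * dist x y) := by
        calc ‖(Real.fourierChar ⟪ω, x⟫ : ℂ) - Real.fourierChar ⟪ω, y⟫‖
            ≤ 2 * π * |⟪ω, x⟫ - ⟪ω, y⟫| := aux_norm_char_sub _ _
          _ ≤ 2 * π * (‖ω‖ * dist x y) := by
              have e1 : ⟪ω, x⟫ - ⟪ω, y⟫ = ⟪ω, x - y⟫ := (inner_sub_right ω x y).symm
              rw [e1]
              have h2 := abs_real_inner_le_norm ω (x - y)
              have e2 : ‖x - y‖ = dist x y := (dist_eq_norm x y).symm
              rw [e2] at h2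
              have hπ : (0:ℝ) ≤ 2 * π := by positivity
              nlinarith
      calc ‖(Real.fourierChar ⟪ω, x⟫ : ℂ) - Real.fourierChar ⟪ω, y⟫‖ * ‖g ω‖
          ≤ (2 * π * (‖ω‖ * dist x y)) * (ρ / (1 + ‖ω‖ ^ k)) :=
            mul_le_mul hdiff (hg_bound ω) (norm_nonneg _) (by positivity)
        _ = (2 * π * dist x y) * (ρ * (‖ω‖ ^ 1 / (1 + ‖ω‖ ^ k))) := by
            rw [pow_one]
            ring
    rw [Real.dist_eq]
    have hcst : (0:ℝ) ≤ 4 * π * A * ρ := by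
      have := mul_nonneg (mul_nonneg (mul_nonneg (by norm_num : (0:ℝ) ≤ 4) pi_pos.le)
        hA0.le) hρ.le
      linarith
    calc |f x - f y| = ‖(f x : ℂ) - (f y : ℂ)‖ := by
          rw [← Complex.ofReal_sub, Complex.norm_real, Real.norm_eq_abs]
      _ ≤ ∫ ω : EuclideanSpace ℝ (Fin n), (2 * π * dist x y) * (ρ * (‖ω‖ ^ 1 / (1 + ‖ω‖ ^ k))) := hbd
      _ = (2 * π * dist x y) * (ρ * ∫ ω : EuclideanSpace ℝ (Fin n), ‖ω‖ ^ 1 / (1 + ‖ω‖ ^ k)) := by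
          rw [integral_const_mul, integral_const_mul]
      _ ≤ (2 * π * dist x y) * (ρ * (2 * A)) := by
          apply mul_le_mul_of_nonneg_left
            (mul_le_mul_of_nonneg_left h1.2 hρ.le) (by positivity)
      _ = (4 * π * A * ρ) * dist x y := by ring
      _ = ↑(Real.toNNReal (4 * π * A * ρ)) * dist x y := by
          rw [Real.coe_toNNReal _ hcst]
  · -- sup bound
    intro x
    have hb : ‖(f x : ℂ)‖ ≤ ∫ ω : EuclideanSpace ℝ (Fin n), ρ * (‖ω‖ ^ 0 / (1 + ‖ω‖ ^ k)) := by
      rw [hinv x]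
      apply norm_integral_le_of_norm_le (h0.1.const_mul ρ)
      filter_upwards with ω
      rw [norm_mul]
      have h1' : ‖(Real.fourierChar ⟪ω, x⟫ : ℂ)‖ = 1 := Circle.norm_coe _
      rw [h1', one_mul]
      simpa [pow_zero, mul_one_div, div_eq_mul_inv] using hg_bound ω
    rw [Complex.norm_real, Real.norm_eq_abs] at hb
    calc |f x| ≤ ∫ ω : EuclideanSpace ℝ (Fin n), ρ * (‖ω‖ ^ 0 / (1 + ‖ω‖ ^ k)) := hb
      _ = ρ * ∫ ω : EuclideanSpace ℝ (Fin n), ‖ω‖ ^ 0 / (1 + ‖ω‖ ^ k) := integral_const_mul _ _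
      _ ≤ ρ * (2 * A) := mul_le_mul_of_nonneg_left h0.2 hρ.le
      _ = 2 * ρ * A := by ring
end

section
/- Suppose f : ℝⁿ → ℝ is real-valued with f̂ ∈ L¹ and Z := ∫ |f̂(ω)|‖2πω‖² dω < ∞. Then there exist h : S^{n-1} × [−R,R] → ℝ with ‖h‖_∞ ≤ Z, a ∈ ℝⁿ with ‖a‖ ≤ √(‖f̂‖₁ Z), and b ∈ ℝ with |b| ≤ ‖f̂‖₁ + R√(‖f̂‖₁ Z), such that for all ‖x‖ ≤ R: f(x) = ∫_{S^{n-1}} ∫_{−R}^R h(α,t) σ(α^⊤x − t) q(α) dt μ_{n-1}(dα) + a^⊤x + b, where q(α) = ∫_0^∞ p(rα) r^{n-1} dr and p(ω) = |f̂(ω)|‖2πω‖²/Z. -/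
open MeasureTheory Real RealInnerProductSpace

section BarronAux

open Measure Metric Set intervalIntegral

variable {n : ℕ}

noncomputable def GG (fhat : EuclideanSpace ℝ (Fin n) → ℂ) (ω : EuclideanSpace ℝ (Fin n)) (t : ℝ) : ℝ :=
  (fhat ω).re * Real.cos (2*π*‖ω‖*t) - (fhat ω).im * Real.sin (2*π*‖ω‖*t)

noncomputable def TT (fhat : EuclideanSpace ℝ (Fin n) → ℂ) (R : ℝ) (x ω : EuclideanSpace ℝ (Fin n)) : ℝ :=
  ∫ t in (-R)..R, max 0 (⟪‖ω‖⁻¹ • ω, x⟫ - t) * (-(2*π*‖ω‖)^2 * GG fhat ω t)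

noncomputable def DD (fhat : EuclideanSpace ℝ (Fin n) → ℂ) (R : ℝ) (ω : EuclideanSpace ℝ (Fin n)) : ℝ :=
  -((2*π*‖ω‖)*((fhat ω).re * Real.sin (2*π*‖ω‖*(-R)))) - (2*π*‖ω‖)*((fhat ω).im * Real.cos (2*π*‖ω‖*(-R)))

noncomputable def EE (fhat : EuclideanSpace ℝ (Fin n) → ℂ) (R : ℝ) (ω : EuclideanSpace ℝ (Fin n)) : ℝ :=
  -((fhat ω).re * Real.sin (2*π*‖ω‖*(-R)) + (fhat ω).im * Real.cos (2*π*‖ω‖*(-R)))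

noncomputable def BB (fhat : EuclideanSpace ℝ (Fin n) → ℂ) (R : ℝ) (ω : EuclideanSpace ℝ (Fin n)) : ℝ :=
  (fhat ω).re * Real.cos (2*π*‖ω‖*(-R)) - (fhat ω).im * Real.sin (2*π*‖ω‖*(-R))

noncomputable def aFF (fhat : EuclideanSpace ℝ (Fin n) → ℂ) (R : ℝ) (ω : EuclideanSpace ℝ (Fin n)) :
    EuclideanSpace ℝ (Fin n) := (2*π*EE fhat R ω) • ω

noncomputable def bFF (fhat : EuclideanSpace ℝ (Fin n) → ℂ) (R : ℝ) (ω : EuclideanSpace ℝ (Fin n)) : ℝ :=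
  R * DD fhat R ω + BB fhat R ω

noncomputable def PHI (fhat : EuclideanSpace ℝ (Fin n) → ℂ) (α : sphere (0 : EuclideanSpace ℝ (Fin n)) 1)
    (t : ℝ) : ℝ :=
  ∫ r in Ioi (0:ℝ),
    (-(2*π*r)^2 * ((fhat (r • α.val)).re * Real.cos (2*π*r*t) - (fhat (r • α.val)).im * Real.sin (2*π*r*t)))
      * r^(n-1)

lemma taylor_cos_key (A B c R u : ℝ) (hu1 : -R ≤ u) (hu2 : u ≤ R) :
    A * Real.cos (c*u) - B * Real.sin (c*u)
      = (∫ t in (-R)..R, max 0 (u - t) * (-(c^2) * (A * Real.cos (c*t) - B * Real.sin (c*t))))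
        + (u + R) * (-(c*(A * Real.sin (c*(-R)))) - c*(B * Real.cos (c*(-R))))
        + (A * Real.cos (c*(-R)) - B * Real.sin (c*(-R))) := by
  set g : ℝ → ℝ := fun t => A * Real.cos (c*t) - B * Real.sin (c*t) with hg
  set g1 : ℝ → ℝ := fun t => -(c*(A * Real.sin (c*t))) - c*(B * Real.cos (c*t)) with hg1
  have hgd : ∀ t : ℝ, HasDerivAt g (g1 t) t := by
    intro t
    have hct : HasDerivAt (fun t : ℝ => c * t) c t := by
      simpa using (hasDerivAt_id t).const_mul c
    have h1 : HasDerivAt (fun t => A * Real.cos (c*t)) (A * (-Real.sin (c*t) * c)) t :=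
      (hct.cos).const_mul A
    have h2 : HasDerivAt (fun t => B * Real.sin (c*t)) (B * (Real.cos (c*t) * c)) t :=
      (hct.sin).const_mul B
    refine (h1.sub h2).congr_deriv ?_
    simp [hg1]; ring
  have hg1d : ∀ t : ℝ, HasDerivAt g1 (-(c^2) * g t) t := by
    intro t
    have hct : HasDerivAt (fun t : ℝ => c * t) c t := by
      simpa using (hasDerivAt_id t).const_mul c
    have h1 : HasDerivAt (fun t => c*(A * Real.sin (c*t))) (c*(A * (Real.cos (c*t) * c))) t :=
      ((hct.sin).const_mul A).const_mul c
    have h2 : HasDerivAt (fun t => c*(B * Real.cos (c*t))) (c*(B * (-Real.sin (c*t) * c))) t :=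
      ((hct.cos).const_mul B).const_mul c
    refine ((h1.neg).sub h2).congr_deriv ?_
    simp [hg]; ring
  have hF : ∀ t : ℝ, HasDerivAt (fun t => g t + (u - t) * g1 t)
      ((u - t) * (-(c^2) * g t)) t := by
    intro t
    have h1 : HasDerivAt (fun t : ℝ => u - t) (-1) t := by
      simpa using (hasDerivAt_id t).const_sub u
    have := (hgd t).add ((h1.mul (hg1d t)))
    refine this.congr_deriv ?_
    ring
  have hcontg : Continuous g := by fun_prop
  have hcont2 : Continuous fun t => (u - t) * (-(c^2) * g t) := by fun_prop
  have htay : (∫ t in (-R)..u, (u - t) * (-(c^2) * g t))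
      = (g u + (u - u) * g1 u) - (g (-R) + (u - (-R)) * g1 (-R)) :=
    integral_eq_sub_of_hasDerivAt (fun t _ => hF t) (hcont2.intervalIntegrable _ _)
  have hsplit : (∫ t in (-R)..R, max 0 (u - t) * (-(c^2) * g t))
      = (∫ t in (-R)..u, max 0 (u - t) * (-(c^2) * g t))
        + (∫ t in u..R, max 0 (u - t) * (-(c^2) * g t)) := by
    rw [integral_add_adjacent_intervals] <;>
      exact (Continuous.intervalIntegrable (by fun_prop) _ _)
  have hA : (∫ t in (-R)..u, max 0 (u - t) * (-(c^2) * g t))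
      = (∫ t in (-R)..u, (u - t) * (-(c^2) * g t)) := by
    apply integral_congr
    intro t ht
    rw [Set.uIcc_of_le hu1] at ht
    have : 0 ≤ u - t := by linarith [ht.2]
    simp only [max_eq_right this]
  have hB : (∫ t in u..R, max 0 (u - t) * (-(c^2) * g t)) = 0 := by
    have : ∀ t ∈ Set.uIcc u R, max 0 (u - t) * (-(c^2) * g t) = 0 := by
      intro t ht
      rw [Set.uIcc_of_le hu2] at ht
      have : u - t ≤ 0 := by linarith [ht.1]
      simp only [max_eq_left this]; ring
    rw [integral_congr this]; simp
  have : (∫ t in (-R)..R, max 0 (u - t) * (-(c^2) * g t))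
      = g u - g (-R) - (u + R) * g1 (-R) := by
    rw [hsplit, hA, hB, htay]; ring
  simp only [hg, hg1] at this ⊢
  linarith [this]

lemma exp_mul_re (z : ℂ) (r : ℝ) :
    (Complex.exp ((2*π*r : ℝ) * Complex.I) * z).re
      = z.re * Real.cos (2*π*r) - z.im * Real.sin (2*π*r) := by
  rw [Complex.mul_re, Complex.exp_ofReal_mul_I_re, Complex.exp_ofReal_mul_I_im]; ring

lemma trig_bound (z : ℂ) (s c0 : ℝ) (h : s^2 + c0^2 = 1) : |z.re * s + z.im * c0| ≤ ‖z‖ := by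
  have h2 : (z.re * s + z.im * c0)^2 ≤ ‖z‖^2 := by
    rw [Complex.sq_norm, Complex.normSq_apply]
    nlinarith [sq_nonneg (z.re * c0 - z.im * s)]
  have := Real.sqrt_le_sqrt h2
  rwa [Real.sqrt_sq_eq_abs, Real.sqrt_sq (norm_nonneg z)] at this

lemma norm_smul_sphere (α : sphere (0 : EuclideanSpace ℝ (Fin n)) 1) {r : ℝ} (hr : 0 ≤ r) :
    ‖r • (α.val : EuclideanSpace ℝ (Fin n))‖ = r := by
  rw [norm_smul, Real.norm_eq_abs, abs_of_nonneg hr,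
    mem_sphere_zero_iff_norm.1 α.2, mul_one]

lemma pointwise_identity (fhat : EuclideanSpace ℝ (Fin n) → ℂ) (R : ℝ) (hR : 0 < R)
    (x : EuclideanSpace ℝ (Fin n)) (hx : ‖x‖ ≤ R) (ω : EuclideanSpace ℝ (Fin n)) :
    (Complex.exp ((2*π*⟪ω,x⟫ : ℝ) * Complex.I) * fhat ω).re
      = TT fhat R x ω + ⟪aFF fhat R ω, x⟫ + bFF fhat R ω := by
  rw [exp_mul_re]
  rcases eq_or_ne ω 0 with rfl | hω
  · simp only [TT, aFF, bFF, DD, BB, GG, EE]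
    simp [Real.cos_zero, Real.sin_zero]
  · have hnω : ‖ω‖ ≠ 0 := norm_ne_zero_iff.2 hω
    set u : ℝ := ⟪‖ω‖⁻¹ • ω, x⟫ with hu
    have hu1 : |u| ≤ R := by
      have h1 : |u| ≤ ‖‖ω‖⁻¹ • ω‖ * ‖x‖ := abs_real_inner_le_norm _ _
      rw [norm_smul, norm_inv, norm_norm, inv_mul_cancel₀ hnω, one_mul] at h1
      exact h1.trans hx
    have hcu : 2*π*⟪ω, x⟫ = (2*π*‖ω‖) * u := by
      rw [hu, real_inner_smul_left]
      field_simp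
    rw [hcu]
    have := taylor_cos_key (fhat ω).re (fhat ω).im (2*π*‖ω‖) R u
      (neg_le_of_abs_le hu1) (le_of_abs_le hu1)
    rw [this]
    have hD : (u + R) * (-((2*π*‖ω‖)*((fhat ω).re * Real.sin ((2*π*‖ω‖)*(-R))))
          - (2*π*‖ω‖)*((fhat ω).im * Real.cos ((2*π*‖ω‖)*(-R))))
        = ⟪aFF fhat R ω, x⟫ + R * DD fhat R ω := by
      have hinner : ⟪aFF fhat R ω, x⟫ = (2*π*EE fhat R ω) * ⟪ω, x⟫ := by
        rw [aFF, real_inner_smul_left]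
      have hux : ⟪ω, x⟫ = ‖ω‖ * u := by
        rw [hu, real_inner_smul_left]; field_simp
      rw [hinner, hux, DD, EE]
      ring
    simp only [TT, GG]
    rw [hD]
    rw [bFF, BB]
    ring

lemma fourier_rep {f : EuclideanSpace ℝ (Fin n) → ℝ} (hcont : Continuous f)
    (hfint : Integrable f) {fhat : EuclideanSpace ℝ (Fin n) → ℂ}
    (hfhat : fhat = FourierTransform.fourier (fun x => (f x : ℂ)))
    (hfhat_int : Integrable fhat) (hfc : Continuous fhat) (x : EuclideanSpace ℝ (Fin n)) :
    f x = ∫ ω, (Complex.exp ((2*π*⟪ω,x⟫ : ℝ) * Complex.I) * fhat ω).re := by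
  have hC : Continuous fun y : EuclideanSpace ℝ (Fin n) => (f y : ℂ) :=
    Complex.continuous_ofReal.comp hcont
  have hI : Integrable fun y : EuclideanSpace ℝ (Fin n) => (f y : ℂ) := hfint.ofReal
  have hinv := hC.fourierInv_fourier_eq hI (by rw [← hfhat]; exact hfhat_int)
  have h2 : (f x : ℂ) = FourierTransformInv.fourierInv fhat x := by
    rw [hfhat]
    exact (congrFun hinv x).symm
  have h3 : FourierTransformInv.fourierInv fhat x
      = ∫ ω, Complex.exp ((2*π*⟪ω,x⟫ : ℝ) * Complex.I) * fhat ω := by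
    rw [Real.fourierInv_eq]
    exact integral_congr_ae (Filter.Eventually.of_forall fun ω => by
      show (Real.fourierChar (⟪ω,x⟫:ℝ) : Circle) • fhat ω = _
      rw [Circle.smul_def, Real.fourierChar_apply, smul_eq_mul])
  have hKc : Continuous fun ω : EuclideanSpace ℝ (Fin n) =>
      Complex.exp ((2*π*⟪ω,x⟫ : ℝ) * Complex.I) * fhat ω := by
    apply Continuous.mul _ hfc
    apply Complex.continuous_exp.comp
    exact (Complex.continuous_ofReal.comp
      (continuous_const.mul (Continuous.inner continuous_id continuous_const))).mul
      continuous_const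
  have hint : Integrable fun ω : EuclideanSpace ℝ (Fin n) =>
      Complex.exp ((2*π*⟪ω,x⟫ : ℝ) * Complex.I) * fhat ω := by
    refine hfhat_int.norm.mono' hKc.aestronglyMeasurable ?_
    filter_upwards with ω
    rw [norm_mul, Complex.norm_exp_ofReal_mul_I, one_mul]
  have h4 := integral_re hint
  calc f x = ((f x : ℂ)).re := by simp
    _ = (∫ ω, Complex.exp ((2*π*⟪ω,x⟫ : ℝ) * Complex.I) * fhat ω).re := by rw [h2, h3]
    _ = ∫ ω, (Complex.exp ((2*π*⟪ω,x⟫ : ℝ) * Complex.I) * fhat ω).re := by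
        simp only [← RCLike.re_to_complex]
        exact h4.symm

lemma continuous_fhat {f : EuclideanSpace ℝ (Fin n) → ℝ} (hfint : Integrable f)
    {fhat : EuclideanSpace ℝ (Fin n) → ℂ}
    (hfhat : fhat = FourierTransform.fourier (fun x => (f x : ℂ))) : Continuous fhat := by
  rw [hfhat]
  exact VectorFourier.fourierIntegral_continuous Real.continuous_fourierChar
    continuous_inner (hfint.ofReal (𝕜 := ℂ))

lemma integrable_comap_iff (hn : 1 ≤ n) {F : Type*} [NormedAddCommGroup F]
    {g : EuclideanSpace ℝ (Fin n) → F} :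
    Integrable (fun x : ({0}ᶜ : Set (EuclideanSpace ℝ (Fin n))) => g x.1)
      ((volume : Measure (EuclideanSpace ℝ (Fin n))).comap Subtype.val)
      ↔ Integrable g (volume : Measure (EuclideanSpace ℝ (Fin n))) := by
  haveI : Nontrivial (EuclideanSpace ℝ (Fin n)) := by
    have : Module.finrank ℝ (EuclideanSpace ℝ (Fin n)) = n := finrank_euclideanSpace_fin
    exact Module.nontrivial_of_finrank_pos (R := ℝ)
      (by omega : 0 < Module.finrank ℝ (EuclideanSpace ℝ (Fin n)))
  show Integrable (g ∘ Subtype.val) _ ↔ _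
  rw [← (MeasurableEmbedding.subtype_coe
      (measurableSet_singleton (0:EuclideanSpace ℝ (Fin n))).compl).integrable_map_iff,
    map_comap_subtype_coe (measurableSet_singleton (0:EuclideanSpace ℝ (Fin n))).compl,
    MeasureTheory.restrict_compl_singleton]

lemma polar_integrable (hn : 1 ≤ n) {F : Type*} [NormedAddCommGroup F]
    {g : EuclideanSpace ℝ (Fin n) → F}
    (hg : Integrable g (volume : Measure (EuclideanSpace ℝ (Fin n)))) :
    Integrable (fun y : sphere (0:EuclideanSpace ℝ (Fin n)) 1 × Ioi (0:ℝ) => g (y.2.1 • y.1.1))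
      ((volume : Measure (EuclideanSpace ℝ (Fin n))).toSphere.prod (.volumeIoiPow (n - 1))) := by
  haveI : Nontrivial (EuclideanSpace ℝ (Fin n)) := by
    have : Module.finrank ℝ (EuclideanSpace ℝ (Fin n)) = n := finrank_euclideanSpace_fin
    exact Module.nontrivial_of_finrank_pos (R := ℝ)
      (by omega : 0 < Module.finrank ℝ (EuclideanSpace ℝ (Fin n)))
  have hdim : Module.finrank ℝ (EuclideanSpace ℝ (Fin n)) = n := finrank_euclideanSpace_fin
  have hmp := (volume : Measure (EuclideanSpace ℝ (Fin n))).measurePreserving_homeomorphUnitSphereProd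
  rw [hdim] at hmp
  have := (hmp.integrable_comp_emb (Homeomorph.measurableEmbedding _)
    (g := fun y : sphere (0:EuclideanSpace ℝ (Fin n)) 1 × Ioi (0:ℝ) => g (y.2.1 • y.1.1)))
  rw [← this]
  have heq : (fun y : sphere (0:EuclideanSpace ℝ (Fin n)) 1 × Ioi (0:ℝ) => g (y.2.1 • y.1.1)) ∘
      (homeomorphUnitSphereProd (EuclideanSpace ℝ (Fin n)))
      = fun x : ({0}ᶜ : Set (EuclideanSpace ℝ (Fin n))) => g x.1 := by
    funext x
    simp only [Function.comp_apply, homeomorphUnitSphereProd_apply_fst_coe,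
      homeomorphUnitSphereProd_apply_snd_coe]
    rw [smul_inv_smul₀ (norm_ne_zero_iff.2 x.2)]
  rw [heq, integrable_comap_iff hn]
  exact hg

lemma polar_integral (hn : 1 ≤ n) {F : Type*} [NormedAddCommGroup F] [NormedSpace ℝ F]
    (g : EuclideanSpace ℝ (Fin n) → F) :
    ∫ x, g x ∂(volume : Measure (EuclideanSpace ℝ (Fin n)))
      = ∫ y : sphere (0:EuclideanSpace ℝ (Fin n)) 1 × Ioi (0:ℝ), g (y.2.1 • y.1.1)
          ∂((volume : Measure (EuclideanSpace ℝ (Fin n))).toSphere.prod (.volumeIoiPow (n - 1))) := by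
  haveI : Nontrivial (EuclideanSpace ℝ (Fin n)) := by
    have : Module.finrank ℝ (EuclideanSpace ℝ (Fin n)) = n := finrank_euclideanSpace_fin
    exact Module.nontrivial_of_finrank_pos (R := ℝ)
      (by omega : 0 < Module.finrank ℝ (EuclideanSpace ℝ (Fin n)))
  have hdim : Module.finrank ℝ (EuclideanSpace ℝ (Fin n)) = n := finrank_euclideanSpace_fin
  have hmp := (volume : Measure (EuclideanSpace ℝ (Fin n))).measurePreserving_homeomorphUnitSphereProd
  rw [hdim] at hmp
  have h1 : ∫ x, g x ∂(volume : Measure (EuclideanSpace ℝ (Fin n)))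
      = ∫ x : ({0}ᶜ : Set (EuclideanSpace ℝ (Fin n))), g x.1
          ∂((volume : Measure (EuclideanSpace ℝ (Fin n))).comap Subtype.val) := by
    rw [integral_subtype_comap (measurableSet_singleton _).compl,
      MeasureTheory.restrict_compl_singleton]
  rw [h1, ← hmp.integral_comp (Homeomorph.measurableEmbedding _)
    (fun y : sphere (0:EuclideanSpace ℝ (Fin n)) 1 × Ioi (0:ℝ) => g (y.2.1 • y.1.1))]
  congr 1
  funext x
  simp only [homeomorphUnitSphereProd_apply_fst_coe, homeomorphUnitSphereProd_apply_snd_coe]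
  rw [smul_inv_smul₀ (norm_ne_zero_iff.2 x.2)]

lemma volumeIoiPow_integral (m : ℕ) {F : Type*} [NormedAddCommGroup F] [NormedSpace ℝ F]
    (φ : ℝ → F) :
    ∫ r : Ioi (0:ℝ), φ r.1 ∂(MeasureTheory.Measure.volumeIoiPow m)
      = ∫ r in Ioi (0:ℝ), r ^ m • φ r := by
  simp only [MeasureTheory.Measure.volumeIoiPow, ENNReal.ofReal]
  rw [integral_withDensity_eq_integral_smul
    ((measurable_subtype_coe.pow_const _).real_toNNReal)]
  rw [integral_subtype_comap measurableSet_Ioi (fun a : ℝ => Real.toNNReal (a ^ m) • φ a)]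
  refine setIntegral_congr_fun measurableSet_Ioi fun x hx => ?_
  rw [NNReal.smul_def, Real.coe_toNNReal _ (pow_nonneg (le_of_lt hx) _)]

lemma volumeIoiPow_integrable_on {m : ℕ} {φ : ℝ → ℝ}
    (h : Integrable (fun r : Ioi (0:ℝ) => φ r.1) (Measure.volumeIoiPow m)) :
    IntegrableOn (fun r => r^m * φ r) (Ioi 0) volume := by
  simp only [Measure.volumeIoiPow, ENNReal.ofReal] at h
  have h1 := (integrable_withDensity_iff_integrable_smul
    (f := fun r : Ioi (0:ℝ) => (r.1^m).toNNReal)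
    ((measurable_subtype_coe.pow_const _).real_toNNReal)).1 h
  have h2 : IntegrableOn (fun r : ℝ => (r^m).toNNReal • φ r) (Ioi 0) volume := by
    rw [IntegrableOn, ← map_comap_subtype_coe measurableSet_Ioi,
      (MeasurableEmbedding.subtype_coe measurableSet_Ioi).integrable_map_iff]
    exact h1
  refine (integrable_congr ?_).1 h2
  filter_upwards [ae_restrict_mem measurableSet_Ioi] with r hr
  rw [NNReal.smul_def, Real.coe_toNNReal _ (pow_nonneg (le_of_lt hr) _), smul_eq_mul]

lemma slice_eq {fhat : EuclideanSpace ℝ (Fin n) → ℂ} (hfc : Continuous fhat)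
    {R : ℝ} (hR : 0 < R)
    (x : EuclideanSpace ℝ (Fin n)) (hx : ‖x‖ ≤ R) (α : sphere (0 : EuclideanSpace ℝ (Fin n)) 1)
    (hα : IntegrableOn (fun r => ‖fhat (r • α.val)‖ * (2*π*r)^2 * r^(n-1)) (Ioi 0) volume) :
    ∫ r in Ioi (0:ℝ), r^(n-1) • TT fhat R x (r • α.val) ∂volume
      = ∫ t in (-R)..R, max 0 (⟪(α : EuclideanSpace ℝ (Fin n)), x⟫ - t) * PHI fhat α t := by
  set uα : ℝ := ⟪(α : EuclideanSpace ℝ (Fin n)), x⟫ with huα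
  set F : ℝ → ℝ → ℝ := fun r t => max 0 (uα - t) *
      ((-(2*π*r)^2 * ((fhat (r • α.val)).re * Real.cos (2*π*r*t)
        - (fhat (r • α.val)).im * Real.sin (2*π*r*t))) * r^(n-1)) with hF
  have hRR : (-R) ≤ R := by linarith
  have step1 : ∫ r in Ioi (0:ℝ), r^(n-1) • TT fhat R x (r • α.val) ∂volume
      = ∫ r in Ioi (0:ℝ), ∫ t in Ioc (-R) R, F r t ∂volume ∂volume := by
    refine setIntegral_congr_fun measurableSet_Ioi fun r hr => ?_
    have hr' : (0:ℝ) < r := hr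
    have hnorm : ‖r • (α.val : EuclideanSpace ℝ (Fin n))‖ = r := norm_smul_sphere α hr'.le
    simp only [TT, GG, hnorm, smul_smul, inv_mul_cancel₀ hr'.ne', one_smul, ← huα]
    rw [smul_eq_mul, mul_comm, ← intervalIntegral.integral_mul_const,
      intervalIntegral.integral_of_le hRR]
    exact setIntegral_congr_fun measurableSet_Ioc fun t ht => by simp only [hF]; ring
  have hFcont : Continuous (Function.uncurry F) := by
    have h1 : Continuous fun rt : ℝ × ℝ => fhat (rt.1 • α.val) :=
      hfc.comp (by fun_prop)
    simp only [hF, Function.uncurry]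
    fun_prop
  have hFint : Integrable (Function.uncurry F)
      ((volume.restrict (Ioi (0:ℝ))).prod (volume.restrict (Ioc (-R) R))) := by
    have hdom : Integrable (fun z : ℝ × ℝ =>
        (‖fhat (z.1 • α.val)‖ * (2*π*z.1)^2 * z.1^(n-1)) * (2*R))
        ((volume.restrict (Ioi (0:ℝ))).prod (volume.restrict (Ioc (-R) R))) :=
      hα.mul_prod (integrable_const _)
    refine hdom.mono' hFcont.aestronglyMeasurable ?_
    rw [Measure.prod_restrict]
    filter_upwards [ae_restrict_mem (measurableSet_Ioi.prod measurableSet_Ioc)] with z hz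
    obtain ⟨hz1, hz2⟩ := hz
    have habs : |(fhat (z.1 • α.val)).re * Real.cos (2*π*z.1*z.2)
        - (fhat (z.1 • α.val)).im * Real.sin (2*π*z.1*z.2)| ≤ ‖fhat (z.1 • α.val)‖ := by
      have := trig_bound (fhat (z.1 • α.val)) (Real.cos (2*π*z.1*z.2)) (-(Real.sin (2*π*z.1*z.2)))
        (by nlinarith [Real.sin_sq_add_cos_sq (2*π*z.1*z.2)])
      simpa [mul_neg, sub_eq_add_neg] using this
    have hmax : max 0 (uα - z.2) ≤ 2*R := by
      have h1 : |uα| ≤ ‖x‖ := by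
        have := abs_real_inner_le_norm (α : EuclideanSpace ℝ (Fin n)) x
        rwa [mem_sphere_zero_iff_norm.1 α.2, one_mul] at this
      have h2 : -R ≤ z.2 := (hz2 : z.2 ∈ Ioc (-R) R).1.le
      have := abs_le.1 h1
      refine max_le (by linarith) (by linarith)
    have hmax0 : 0 ≤ max 0 (uα - z.2) := le_max_left _ _
    simp only [hF, Function.uncurry, Real.norm_eq_abs]
    rw [abs_mul, abs_mul]
    have e2 : |(-(2*π*z.1)^2 * ((fhat (z.1 • α.val)).re * Real.cos (2*π*z.1*z.2)
        - (fhat (z.1 • α.val)).im * Real.sin (2*π*z.1*z.2)))| ≤ (2*π*z.1)^2 * ‖fhat (z.1 • α.val)‖ := by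
      rw [abs_mul, abs_neg, abs_of_nonneg (sq_nonneg (2*π*z.1))]
      exact mul_le_mul_of_nonneg_left habs (sq_nonneg _)
    have e3 : |z.1^(n-1)| = z.1^(n-1) := abs_of_nonneg (pow_nonneg (le_of_lt hz1) _)
    rw [abs_of_nonneg hmax0, e3]
    calc max 0 (uα - z.2) * (|(-(2*π*z.1)^2 * ((fhat (z.1 • α.val)).re * Real.cos (2*π*z.1*z.2)
          - (fhat (z.1 • α.val)).im * Real.sin (2*π*z.1*z.2)))| * z.1^(n-1))
        ≤ (2*R) * (((2*π*z.1)^2 * ‖fhat (z.1 • α.val)‖) * z.1^(n-1)) := by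
          refine mul_le_mul hmax (mul_le_mul_of_nonneg_right e2 (pow_nonneg hz1.le _))
            (mul_nonneg (abs_nonneg _) (pow_nonneg hz1.le _)) (by linarith)
      _ = ‖fhat (z.1 • α.val)‖ * (2*π*z.1)^2 * z.1^(n-1) * (2*R) := by ring
  have step3 : (∫ r in Ioi (0:ℝ), ∫ t in Ioc (-R) R, F r t ∂volume ∂volume)
      = ∫ t in Ioc (-R) R, ∫ r in Ioi (0:ℝ), F r t ∂volume ∂volume :=
    integral_integral_swap hFint
  have step4 : ∀ t : ℝ, (∫ r in Ioi (0:ℝ), F r t ∂volume) = max 0 (uα - t) * PHI fhat α t := by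
    intro t
    rw [PHI, ← MeasureTheory.integral_const_mul]
  rw [step1, step3, intervalIntegral.integral_of_le hRR]
  exact setIntegral_congr_fun measurableSet_Ioc fun t _ => step4 t

lemma PHI_bound {fhat : EuclideanSpace ℝ (Fin n) → ℂ}
    (α : sphere (0 : EuclideanSpace ℝ (Fin n)) 1) (t : ℝ)
    (hα : IntegrableOn (fun r => ‖fhat (r • α.val)‖ * (2*π*r)^2 * r^(n-1)) (Ioi 0) volume) :
    |PHI fhat α t| ≤ ∫ r in Ioi (0:ℝ), ‖fhat (r • α.val)‖ * (2*π*r)^2 * r^(n-1) := by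
  rw [PHI, ← Real.norm_eq_abs]
  refine norm_integral_le_of_norm_le hα ?_
  filter_upwards [ae_restrict_mem measurableSet_Ioi] with r hr
  have habs : |(fhat (r • α.val)).re * Real.cos (2*π*r*t)
      - (fhat (r • α.val)).im * Real.sin (2*π*r*t)| ≤ ‖fhat (r • α.val)‖ := by
    have := trig_bound (fhat (r • α.val)) (Real.cos (2*π*r*t)) (-(Real.sin (2*π*r*t)))
      (by nlinarith [Real.sin_sq_add_cos_sq (2*π*r*t)])
    simpa [mul_neg, sub_eq_add_neg] using this
  rw [Real.norm_eq_abs, abs_mul, abs_mul, abs_neg, abs_of_nonneg (sq_nonneg (2*π*r)),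
    abs_of_nonneg (pow_nonneg (le_of_lt (show (0:ℝ) < r from hr)) (n-1))]
  calc (2*π*r)^2 * |(fhat (r • α.val)).re * Real.cos (2*π*r*t)
        - (fhat (r • α.val)).im * Real.sin (2*π*r*t)| * r^(n-1)
      ≤ (2*π*r)^2 * ‖fhat (r • α.val)‖ * r^(n-1) := by
        refine mul_le_mul_of_nonneg_right (mul_le_mul_of_nonneg_left habs (sq_nonneg _))
          (pow_nonneg (le_of_lt hr) _)
    _ = ‖fhat (r • α.val)‖ * (2*π*r)^2 * r^(n-1) := by ring

end BarronAux


set_option maxHeartbeats 2000000 in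
/-- ReLU integral representation (Lemma 1): a real-valued `f` with integrable Fourier
transform and finite second Fourier moment `Z` can be written, on the ball of radius `R`, as
`f(x) = ∫_{S^{n-1}} ∫_{-R}^R h(α,t) σ(α⊤x − t) q(α) dt μ_{n-1}(dα) + a⊤x + b`,
with `‖h‖_∞ ≤ Z`, `‖a‖ ≤ √(‖f̂‖₁ Z)`, `|b| ≤ ‖f̂‖₁ + R√(‖f̂‖₁ Z)`, where
`p(ω) = |f̂(ω)|‖2πω‖²/Z` and `q(α) = ∫_0^∞ p(rα) r^{n-1} dr`, and `μ_{n-1}` is the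
surface measure on the unit sphere. -/
theorem relu_integral_representation_lemma
    (n : ℕ) (hn : 1 ≤ n) (R : ℝ) (hR : 0 < R)
    (f : EuclideanSpace ℝ (Fin n) → ℝ) (hcont : Continuous f) (hfint : Integrable f)
    (fhat : EuclideanSpace ℝ (Fin n) → ℂ)
    (hfhat : fhat = FourierTransform.fourier (fun x => (f x : ℂ)))
    (hfhat_int : Integrable fhat)
    (hZ_int : Integrable (fun ω => ‖fhat ω‖ * ‖(2 * π) • ω‖ ^ 2))
    (Z F1 : ℝ) (hZ : Z = ∫ ω, ‖fhat ω‖ * ‖(2 * π) • ω‖ ^ 2) (hZpos : 0 < Z)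
    (hF1 : F1 = ∫ ω, ‖fhat ω‖)
    (p : EuclideanSpace ℝ (Fin n) → ℝ) (hp : p = fun ω => ‖fhat ω‖ * ‖(2 * π) • ω‖ ^ 2 / Z)
    (q : Metric.sphere (0 : EuclideanSpace ℝ (Fin n)) 1 → ℝ)
    (hq : q = fun α => ∫ r in Set.Ioi (0:ℝ), p (r • Subtype.val α) * r ^ (n - 1)) :
    ∃ (h : Metric.sphere (0 : EuclideanSpace ℝ (Fin n)) 1 → ℝ → ℝ)
      (a : EuclideanSpace ℝ (Fin n)) (b : ℝ),
      (∀ α t, t ∈ Set.Icc (-R) R → |h α t| ≤ Z) ∧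
      ‖a‖ ≤ Real.sqrt (F1 * Z) ∧
      |b| ≤ F1 + R * Real.sqrt (F1 * Z) ∧
      ∀ x : EuclideanSpace ℝ (Fin n), ‖x‖ ≤ R →
        f x = (∫ α, (∫ t in (-R)..R,
                h α t * max 0 (⟪(α : EuclideanSpace ℝ (Fin n)), x⟫ - t)) * q α
              ∂(volume : Measure (EuclideanSpace ℝ (Fin n))).toSphere)
            + ⟪a, x⟫ + b := by
  have hπ : (0:ℝ) < π := Real.pi_pos
  have hfc : Continuous fhat := continuous_fhat hfint hfhat
  have hnsm : ∀ ω : EuclideanSpace ℝ (Fin n), ‖(2 * π) • ω‖ = 2*π*‖ω‖ := fun ω => by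
    rw [norm_smul, Real.norm_eq_abs, abs_of_pos (by positivity)]
  -- Z in convenient form
  have hWeq : (fun ω : EuclideanSpace ℝ (Fin n) => ‖fhat ω‖ * ‖(2 * π) • ω‖ ^ 2)
      = fun ω => ‖fhat ω‖ * (2*π*‖ω‖)^2 := by
    funext ω; rw [hnsm ω]
  have hZint2 : Integrable (fun ω : EuclideanSpace ℝ (Fin n) => ‖fhat ω‖ * (2*π*‖ω‖)^2) := by
    rw [← hWeq]; exact hZ_int
  have hZ2 : Z = ∫ ω : EuclideanSpace ℝ (Fin n), ‖fhat ω‖ * (2*π*‖ω‖)^2 := by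
    rw [hZ, hWeq]
  -- positivity of F1
  have hF1nonneg : 0 ≤ F1 := hF1 ▸ integral_nonneg fun ω => norm_nonneg _
  have hF1pos : 0 < F1 := by
    rcases hF1nonneg.lt_or_eq with h | h
    · exact h
    · exfalso
      have h0 : ∫ ω : EuclideanSpace ℝ (Fin n), ‖fhat ω‖ = 0 := by rw [← hF1, ← h]
      have hae : (fun ω : EuclideanSpace ℝ (Fin n) => ‖fhat ω‖) =ᵐ[volume] 0 :=
        (integral_eq_zero_iff_of_nonneg (fun ω => norm_nonneg _) hfhat_int.norm).1 h0
      have : Z = 0 := by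
        rw [hZ]
        rw [integral_congr_ae (g := fun _ => (0:ℝ)) ?_, integral_zero]
        filter_upwards [hae] with ω hω
        simp only [Pi.zero_apply] at hω ⊢
        rw [hω, zero_mul]
      exact hZpos.ne' this
  -- integrability of ‖fhat‖ * (2π‖ω‖)
  have hIntc : Integrable (fun ω : EuclideanSpace ℝ (Fin n) => ‖fhat ω‖ * (2*π*‖ω‖)) := by
    refine (hfhat_int.norm.add hZint2).mono'
      ((hfc.norm.mul (continuous_const.mul continuous_norm)).aestronglyMeasurable) ?_
    filter_upwards with ω
    have hc : (0:ℝ) ≤ 2*π*‖ω‖ := by positivity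
    simp only [Pi.add_apply]
    rw [Real.norm_eq_abs, abs_of_nonneg (mul_nonneg (norm_nonneg _) hc)]
    nlinarith [mul_nonneg (norm_nonneg (fhat ω)) (sq_nonneg (2*π*‖ω‖ - 1)),
      mul_nonneg (norm_nonneg (fhat ω)) hc]
  -- the key Cauchy-Schwarz style bound
  set M : ℝ := ∫ ω : EuclideanSpace ℝ (Fin n), ‖fhat ω‖ * (2*π*‖ω‖) with hM
  have hMnonneg : 0 ≤ M := integral_nonneg fun ω => by positivity
  have hMle : M ≤ Real.sqrt (F1 * Z) := by
    set ε : ℝ := Real.sqrt Z / Real.sqrt F1 with hε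
    have hεpos : 0 < ε := div_pos (Real.sqrt_pos.2 hZpos) (Real.sqrt_pos.2 hF1pos)
    have hpt : ∀ ω : EuclideanSpace ℝ (Fin n), ‖fhat ω‖ * (2*π*‖ω‖)
        ≤ (ε * ‖fhat ω‖ + (1/ε) * (‖fhat ω‖ * (2*π*‖ω‖)^2))/2 := by
      intro ω
      rw [le_div_iff₀ (by norm_num : (0:ℝ) < 2), ← sub_nonneg]
      have expand : ε * ‖fhat ω‖ + 1/ε * (‖fhat ω‖ * (2*π*‖ω‖)^2) - ‖fhat ω‖ * (2*π*‖ω‖) * 2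
          = (‖fhat ω‖ * (2*π*‖ω‖ - ε)^2)/ε := by
        field_simp
        ring
      rw [expand]
      positivity
    have hRHSint : Integrable (fun ω : EuclideanSpace ℝ (Fin n) =>
        (ε * ‖fhat ω‖ + (1/ε) * (‖fhat ω‖ * (2*π*‖ω‖)^2))/2) :=
      ((hfhat_int.norm.const_mul ε).add (hZint2.const_mul (1/ε))).div_const 2
    have h1 : M ≤ ∫ ω : EuclideanSpace ℝ (Fin n),
        (ε * ‖fhat ω‖ + (1/ε) * (‖fhat ω‖ * (2*π*‖ω‖)^2))/2 :=
      integral_mono hIntc hRHSint hpt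
    have h2 : (∫ ω : EuclideanSpace ℝ (Fin n),
        (ε * ‖fhat ω‖ + (1/ε) * (‖fhat ω‖ * (2*π*‖ω‖)^2))/2)
        = (ε * F1 + (1/ε) * Z)/2 := by
      rw [integral_div, integral_add (hfhat_int.norm.const_mul ε) (hZint2.const_mul (1/ε)),
        MeasureTheory.integral_const_mul, MeasureTheory.integral_const_mul, ← hF1, ← hZ2]
    have h3 : (ε * F1 + (1/ε) * Z)/2 = Real.sqrt (F1 * Z) := by
      have hsF : Real.sqrt F1 > 0 := Real.sqrt_pos.2 hF1pos
      have hsZ : Real.sqrt Z > 0 := Real.sqrt_pos.2 hZpos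
      have hf1 : Real.sqrt F1 ^ 2 = F1 := Real.sq_sqrt hF1nonneg
      have hz1 : Real.sqrt Z ^ 2 = Z := Real.sq_sqrt hZpos.le
      rw [Real.sqrt_mul hF1nonneg, hε]
      rw [← hf1, ← hz1]
      field_simp
      rw [Real.sqrt_sq hsZ.le, Real.sqrt_sq hsF.le]
      ring
    rw [h2, h3] at h1
    exact h1
  -- pointwise bounds for the coefficient functions
  have hEEb : ∀ ω : EuclideanSpace ℝ (Fin n), |EE fhat R ω| ≤ ‖fhat ω‖ := fun ω => by
    rw [EE, abs_neg]
    exact trig_bound (fhat ω) (Real.sin (2*π*‖ω‖*(-R))) (Real.cos (2*π*‖ω‖*(-R)))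
      (by nlinarith [Real.sin_sq_add_cos_sq (2*π*‖ω‖*(-R))])
  have hBBb : ∀ ω : EuclideanSpace ℝ (Fin n), |BB fhat R ω| ≤ ‖fhat ω‖ := fun ω => by
    rw [BB]
    have := trig_bound (fhat ω) (Real.cos (2*π*‖ω‖*(-R))) (-(Real.sin (2*π*‖ω‖*(-R))))
      (by nlinarith [Real.sin_sq_add_cos_sq (2*π*‖ω‖*(-R))])
    simpa [mul_neg, sub_eq_add_neg] using this
  have hDDeq : ∀ ω : EuclideanSpace ℝ (Fin n), DD fhat R ω = (2*π*‖ω‖) * EE fhat R ω := fun ω => by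
    rw [DD, EE]; ring
  have hDDb : ∀ ω : EuclideanSpace ℝ (Fin n), |DD fhat R ω| ≤ (2*π*‖ω‖) * ‖fhat ω‖ := fun ω => by
    rw [hDDeq, abs_mul, abs_of_nonneg (by positivity : (0:ℝ) ≤ 2*π*‖ω‖)]
    exact mul_le_mul_of_nonneg_left (hEEb ω) (by positivity)
  -- continuity of coefficient functions
  have hcos : Continuous fun ω : EuclideanSpace ℝ (Fin n) => Real.cos (2*π*‖ω‖*(-R)) := by
    fun_prop
  have hsin : Continuous fun ω : EuclideanSpace ℝ (Fin n) => Real.sin (2*π*‖ω‖*(-R)) := by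
    fun_prop
  have hEEc : Continuous (EE fhat R) := by
    show Continuous fun ω : EuclideanSpace ℝ (Fin n) =>
      -((fhat ω).re * Real.sin (2*π*‖ω‖*(-R)) + (fhat ω).im * Real.cos (2*π*‖ω‖*(-R)))
    exact ((Complex.continuous_re.comp hfc).mul hsin).add
      ((Complex.continuous_im.comp hfc).mul hcos) |>.neg
  have hBBc : Continuous (BB fhat R) := by
    show Continuous fun ω : EuclideanSpace ℝ (Fin n) =>
      (fhat ω).re * Real.cos (2*π*‖ω‖*(-R)) - (fhat ω).im * Real.sin (2*π*‖ω‖*(-R))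
    exact ((Complex.continuous_re.comp hfc).mul hcos).sub
      ((Complex.continuous_im.comp hfc).mul hsin)
  have hDDc : Continuous (DD fhat R) := by
    have : DD fhat R = fun ω => (2*π*‖ω‖) * EE fhat R ω := funext hDDeq
    rw [this]
    exact (continuous_const.mul continuous_norm).mul hEEc
  have haFFc : Continuous (aFF fhat R) := by
    show Continuous fun ω : EuclideanSpace ℝ (Fin n) => (2*π*EE fhat R ω) • ω
    exact ((continuous_const.mul hEEc).smul continuous_id)
  have hbFFc : Continuous (bFF fhat R) := by
    show Continuous fun ω : EuclideanSpace ℝ (Fin n) => R * DD fhat R ω + BB fhat R ω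
    exact (continuous_const.mul hDDc).add hBBc
  -- integrability of coefficient functions
  have hIa : Integrable (aFF fhat R) := by
    refine hIntc.mono' haFFc.aestronglyMeasurable ?_
    filter_upwards with ω
    rw [aFF, norm_smul, Real.norm_eq_abs, abs_mul, abs_of_nonneg (by positivity : (0:ℝ) ≤ 2*π)]
    calc 2*π*|EE fhat R ω| * ‖ω‖ ≤ 2*π*‖fhat ω‖*‖ω‖ :=
          mul_le_mul_of_nonneg_right
            (mul_le_mul_of_nonneg_left (hEEb ω) (by positivity)) (norm_nonneg ω)
      _ = ‖fhat ω‖ * (2*π*‖ω‖) := by ring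
  have hIbF : Integrable (bFF fhat R) := by
    refine ((hIntc.const_mul R).add hfhat_int.norm).mono' hbFFc.aestronglyMeasurable ?_
    filter_upwards with ω
    rw [bFF, Real.norm_eq_abs]
    calc |R * DD fhat R ω + BB fhat R ω| ≤ |R * DD fhat R ω| + |BB fhat R ω| := abs_add_le _ _
      _ ≤ R * ((2*π*‖ω‖) * ‖fhat ω‖) + ‖fhat ω‖ := by
          refine add_le_add ?_ (hBBb ω)
          rw [abs_mul, abs_of_pos hR]
          exact mul_le_mul_of_nonneg_left (hDDb ω) hR.le
      _ = R * (‖fhat ω‖ * (2*π*‖ω‖)) + ‖fhat ω‖ := by ring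
  -- define a and b
  set a : EuclideanSpace ℝ (Fin n) := ∫ ω, aFF fhat R ω with ha
  set b : ℝ := ∫ ω, bFF fhat R ω with hb
  have ha_norm : ‖a‖ ≤ Real.sqrt (F1 * Z) := by
    refine le_trans ?_ hMle
    rw [ha, hM]
    refine norm_integral_le_of_norm_le hIntc ?_
    filter_upwards with ω
    rw [aFF, norm_smul, Real.norm_eq_abs, abs_mul, abs_of_nonneg (by positivity : (0:ℝ) ≤ 2*π)]
    calc 2*π*|EE fhat R ω| * ‖ω‖ ≤ 2*π*‖fhat ω‖*‖ω‖ :=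
          mul_le_mul_of_nonneg_right
            (mul_le_mul_of_nonneg_left (hEEb ω) (by positivity)) (norm_nonneg ω)
      _ = ‖fhat ω‖ * (2*π*‖ω‖) := by ring
  have hb_abs : |b| ≤ F1 + R * Real.sqrt (F1 * Z) := by
    have h1 : |b| ≤ ∫ ω : EuclideanSpace ℝ (Fin n), (R * (‖fhat ω‖ * (2*π*‖ω‖)) + ‖fhat ω‖) := by
      rw [hb, ← Real.norm_eq_abs]
      refine norm_integral_le_of_norm_le ((hIntc.const_mul R).add hfhat_int.norm) ?_
      filter_upwards with ω
      rw [bFF, Real.norm_eq_abs]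
      calc |R * DD fhat R ω + BB fhat R ω| ≤ |R * DD fhat R ω| + |BB fhat R ω| := abs_add_le _ _
        _ ≤ R * ((2*π*‖ω‖) * ‖fhat ω‖) + ‖fhat ω‖ := by
            refine add_le_add ?_ (hBBb ω)
            rw [abs_mul, abs_of_pos hR]
            exact mul_le_mul_of_nonneg_left (hDDb ω) hR.le
        _ = R * (‖fhat ω‖ * (2*π*‖ω‖)) + ‖fhat ω‖ := by ring
    have h2 : (∫ ω : EuclideanSpace ℝ (Fin n), (R * (‖fhat ω‖ * (2*π*‖ω‖)) + ‖fhat ω‖))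
        = R * M + F1 := by
      rw [integral_add (hIntc.const_mul R) hfhat_int.norm, MeasureTheory.integral_const_mul, hM, hF1]
    rw [h2] at h1
    have h3 : R * M ≤ R * Real.sqrt (F1 * Z) := mul_le_mul_of_nonneg_left hMle hR.le
    linarith
  -- the q functions
  have hq_eq : ∀ α : Metric.sphere (0 : EuclideanSpace ℝ (Fin n)) 1,
      q α = (∫ r in Set.Ioi (0:ℝ), ‖fhat (r • α.val)‖ * (2*π*r)^2 * r^(n-1)) / Z := by
    intro α
    rw [hq]
    show (∫ r in Set.Ioi (0:ℝ), p (r • Subtype.val α) * r ^ (n - 1)) = _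
    have : ∀ r ∈ Set.Ioi (0:ℝ), p (r • Subtype.val α) * r ^ (n-1)
        = (‖fhat (r • α.val)‖ * (2*π*r)^2 * r^(n-1)) / Z := by
      intro r hr
      rw [hp]
      have : ‖(2 * π) • (r • α.val)‖ = 2*π*r := by
        rw [hnsm, norm_smul_sphere α (le_of_lt hr)]
      simp only [this]
      ring
    rw [setIntegral_congr_fun measurableSet_Ioi this, integral_div]
  have hq_nonneg : ∀ α : Metric.sphere (0 : EuclideanSpace ℝ (Fin n)) 1, 0 ≤ q α := by
    intro α
    rw [hq_eq]
    apply div_nonneg _ hZpos.le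
    apply setIntegral_nonneg measurableSet_Ioi
    intro r hr
    have hr' : (0:ℝ) < r := hr
    positivity
  have hq_ne_int : ∀ α : Metric.sphere (0 : EuclideanSpace ℝ (Fin n)) 1, q α ≠ 0 →
      IntegrableOn (fun r => ‖fhat (r • α.val)‖ * (2*π*r)^2 * r^(n-1)) (Set.Ioi 0) volume := by
    intro α hqα
    by_contra hni
    apply hqα
    rw [hq_eq, integral_undef hni, zero_div]
  -- definition of h
  set hfun : Metric.sphere (0 : EuclideanSpace ℝ (Fin n)) 1 → ℝ → ℝ :=
    fun α t => if q α = 0 then 0 else PHI fhat α t / q α with hhfun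
  have hZq : ∀ α : Metric.sphere (0 : EuclideanSpace ℝ (Fin n)) 1,
      Z * q α = ∫ r in Set.Ioi (0:ℝ), ‖fhat (r • α.val)‖ * (2*π*r)^2 * r^(n-1) := by
    intro α
    rw [hq_eq, mul_div_cancel₀ _ hZpos.ne']
  have hhb : ∀ α t, |hfun α t| ≤ Z := by
    intro α t
    rw [hhfun]
    by_cases hq0 : q α = 0
    · simp [hq0, hZpos.le]
    · simp only [if_neg hq0]
      have hqpos : 0 < q α := lt_of_le_of_ne (hq_nonneg α) (Ne.symm hq0)
      have hint := hq_ne_int α hq0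
      have hbd := PHI_bound α t hint
      rw [← hZq α] at hbd
      rw [abs_div, abs_of_pos hqpos, div_le_iff₀ hqpos]
      exact hbd
  -- provide witnesses
  refine ⟨hfun, a, b, fun α t _ => hhb α t, ha_norm, hb_abs, ?_⟩
  intro x hx
  -- the pointwise integrand identity
  have hrep := fourier_rep hcont hfint hfhat hfhat_int hfc x
  have hpt : ∀ ω : EuclideanSpace ℝ (Fin n),
      (Complex.exp ((2*π*⟪ω,x⟫ : ℝ) * Complex.I) * fhat ω).re
        = TT fhat R x ω + ⟪aFF fhat R ω, x⟫ + bFF fhat R ω :=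
    pointwise_identity fhat R hR x hx
  -- integrability of pieces
  have hKc : Continuous fun ω : EuclideanSpace ℝ (Fin n) =>
      Complex.exp ((2*π*⟪ω,x⟫ : ℝ) * Complex.I) * fhat ω := by
    apply Continuous.mul _ hfc
    apply Complex.continuous_exp.comp
    exact (Complex.continuous_ofReal.comp
      (continuous_const.mul (Continuous.inner continuous_id continuous_const))).mul
      continuous_const
  have hIexp : Integrable (fun ω : EuclideanSpace ℝ (Fin n) =>
      (Complex.exp ((2*π*⟪ω,x⟫ : ℝ) * Complex.I) * fhat ω).re) := by
    refine hfhat_int.norm.mono' (Complex.continuous_re.comp hKc).aestronglyMeasurable ?_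
    filter_upwards with ω
    rw [Real.norm_eq_abs]
    calc |(Complex.exp ((2*π*⟪ω,x⟫ : ℝ) * Complex.I) * fhat ω).re|
        ≤ ‖Complex.exp ((2*π*⟪ω,x⟫ : ℝ) * Complex.I) * fhat ω‖ := Complex.abs_re_le_norm _
      _ = ‖fhat ω‖ := by
          rw [norm_mul, Complex.norm_exp_ofReal_mul_I, one_mul]
  have hIinner : Integrable (fun ω : EuclideanSpace ℝ (Fin n) => ⟪aFF fhat R ω, x⟫) := by
    refine (hIntc.mul_const ‖x‖).mono'
      ((Continuous.inner haFFc continuous_const).aestronglyMeasurable) ?_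
    filter_upwards with ω
    rw [Real.norm_eq_abs]
    calc |⟪aFF fhat R ω, x⟫| ≤ ‖aFF fhat R ω‖ * ‖x‖ := abs_real_inner_le_norm _ _
      _ ≤ (‖fhat ω‖ * (2*π*‖ω‖)) * ‖x‖ := by
          refine mul_le_mul_of_nonneg_right ?_ (norm_nonneg x)
          rw [aFF, norm_smul, Real.norm_eq_abs, abs_mul,
            abs_of_nonneg (by positivity : (0:ℝ) ≤ 2*π)]
          calc 2*π*|EE fhat R ω| * ‖ω‖ ≤ 2*π*‖fhat ω‖*‖ω‖ :=
                mul_le_mul_of_nonneg_right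
                  (mul_le_mul_of_nonneg_left (hEEb ω) (by positivity)) (norm_nonneg ω)
            _ = ‖fhat ω‖ * (2*π*‖ω‖) := by ring
  have hITT : Integrable (TT fhat R x) := by
    have heq : TT fhat R x = fun ω =>
        (Complex.exp ((2*π*⟪ω,x⟫ : ℝ) * Complex.I) * fhat ω).re
          - ⟪aFF fhat R ω, x⟫ - bFF fhat R ω := by
      funext ω
      rw [hpt ω]; ring
    rw [heq]
    exact (hIexp.sub hIinner).sub hIbF
  -- split the integral
  have hsplit : f x = (∫ ω, TT fhat R x ω) + ⟪a, x⟫ + b := by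
    rw [hrep]
    have h1 : (∫ ω : EuclideanSpace ℝ (Fin n),
        (Complex.exp ((2*π*⟪ω,x⟫ : ℝ) * Complex.I) * fhat ω).re)
        = ∫ ω : EuclideanSpace ℝ (Fin n),
            (TT fhat R x ω + ⟪aFF fhat R ω, x⟫ + bFF fhat R ω) := by
      exact integral_congr_ae (Filter.Eventually.of_forall hpt)
    rw [h1]
    have hadd : (∫ ω : EuclideanSpace ℝ (Fin n),
        (TT fhat R x ω + ⟪aFF fhat R ω, x⟫ + bFF fhat R ω))
        = ((∫ ω, TT fhat R x ω) + ∫ ω : EuclideanSpace ℝ (Fin n), ⟪aFF fhat R ω, x⟫)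
          + ∫ ω, bFF fhat R ω := by
      have hI12 : Integrable (fun ω : EuclideanSpace ℝ (Fin n) =>
          TT fhat R x ω + ⟪aFF fhat R ω, x⟫) := hITT.add hIinner
      rw [← integral_add hITT hIinner, ← integral_add hI12 hIbF]
    rw [hadd]
    have h2 : (∫ ω : EuclideanSpace ℝ (Fin n), ⟪aFF fhat R ω, x⟫) = ⟪a, x⟫ := by
      rw [show (fun ω : EuclideanSpace ℝ (Fin n) => (⟪aFF fhat R ω, x⟫ : ℝ))
          = fun ω => ⟪x, aFF fhat R ω⟫ from funext fun ω => real_inner_comm _ _]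
      rw [integral_inner hIa x, ha, real_inner_comm]
    rw [h2, hb]
  rw [hsplit]
  congr 1
  congr 1
  -- the polar coordinates part
  have E1 := polar_integral hn (TT fhat R x)
  have E2 : (∫ y : Metric.sphere (0 : EuclideanSpace ℝ (Fin n)) 1 × Set.Ioi (0:ℝ),
        TT fhat R x (y.2.1 • y.1.1)
        ∂((volume : Measure (EuclideanSpace ℝ (Fin n))).toSphere.prod (.volumeIoiPow (n - 1))))
      = ∫ α, (∫ r : Set.Ioi (0:ℝ), TT fhat R x (r.1 • α.val)
          ∂(MeasureTheory.Measure.volumeIoiPow (n-1)))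
          ∂(volume : Measure (EuclideanSpace ℝ (Fin n))).toSphere :=
    integral_prod _ (polar_integrable hn hITT)
  have E3 : ∀ α : Metric.sphere (0 : EuclideanSpace ℝ (Fin n)) 1,
      (∫ r : Set.Ioi (0:ℝ), TT fhat R x (r.1 • α.val) ∂(MeasureTheory.Measure.volumeIoiPow (n-1)))
        = ∫ r in Set.Ioi (0:ℝ), r^(n-1) • TT fhat R x (r • α.val) :=
    fun α => volumeIoiPow_integral (n-1) (fun r => TT fhat R x (r • α.val))
  -- a.e. goodness
  have hae : ∀ᵐ α ∂(volume : Measure (EuclideanSpace ℝ (Fin n))).toSphere,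
      IntegrableOn (fun r => ‖fhat (r • α.val)‖ * (2*π*r)^2 * r^(n-1)) (Set.Ioi 0) volume := by
    have hWprod := (polar_integrable hn hZ_int).prod_right_ae
    filter_upwards [hWprod] with α hα
    have h1 := volumeIoiPow_integrable_on (φ := fun r => ‖fhat (r • α.val)‖ * ‖(2*π) • (r • α.val)‖^2) hα
    refine (integrable_congr ?_).1 h1
    filter_upwards [ae_restrict_mem measurableSet_Ioi] with r hr
    rw [hnsm, norm_smul_sphere α (le_of_lt hr)]
    ring
  -- a.e. equality of slices
  have E5 : ∀ᵐ α ∂(volume : Measure (EuclideanSpace ℝ (Fin n))).toSphere,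
      (∫ r in Set.Ioi (0:ℝ), r^(n-1) • TT fhat R x (r • α.val))
        = (∫ t in (-R)..R, hfun α t * max 0 (⟪(α : EuclideanSpace ℝ (Fin n)), x⟫ - t)) * q α := by
    filter_upwards [hae] with α hα
    rw [slice_eq hfc hR x hx α hα]
    have hptt : ∀ t : ℝ, max 0 (⟪(α : EuclideanSpace ℝ (Fin n)), x⟫ - t) * PHI fhat α t
        = hfun α t * max 0 (⟪(α : EuclideanSpace ℝ (Fin n)), x⟫ - t) * q α := by
      intro t
      by_cases hq0 : q α = 0
      · have hQ0 : (∫ r in Set.Ioi (0:ℝ), ‖fhat (r • α.val)‖ * (2*π*r)^2 * r^(n-1)) = 0 := by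
          rw [← hZq α, hq0, mul_zero]
        have hPHI0 : PHI fhat α t = 0 := by
          have := PHI_bound α t hα
          rw [hQ0] at this
          exact abs_eq_zero.1 (le_antisymm this (abs_nonneg _))
        rw [hhfun]
        simp [hq0, hPHI0]
      · rw [hhfun]
        simp only [if_neg hq0]
        field_simp
    rw [← intervalIntegral.integral_mul_const]
    exact intervalIntegral.integral_congr fun t _ => hptt t
  rw [E1, E2]
  refine integral_congr_ae ?_
  filter_upwards [E5] with α hα
  rw [E3 α, hα]
end

section
/- Under the hypotheses of the ReLU integral representation lemma, if moreover |f̂(ω)|(1+‖ω‖^k) ≤ ρ for all ω with k ≥ n+3, then the representation holds with sup over (α,t) ∈ S^{n-1} × [−R,R] of |h(α,t) q(α)| bounded by 8π²ρ. -/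
open MeasureTheory Real RealInnerProductSpace FourierTransform


open MeasureTheory Real Set

/-- Key FTC identity: a complex exponential ridge profile equals affine part plus
second derivative integrated against the ReLU kernel. -/
lemma taylor_relu (c : ℂ) (r R s : ℝ) (hR : 0 < R) (hs : s ∈ Set.Icc (-R) R) :
    (c * Complex.exp ((2 * π * r * s : ℝ) * Complex.I)).re =
      (∫ t in (-R)..R,
        (-(4 * π ^ 2 * r ^ 2) * (c * Complex.exp ((2 * π * r * t : ℝ) * Complex.I)).re)
          * max 0 (s - t))
      + (c * (2 * π * r * Complex.I) * Complex.exp ((2 * π * r * (-R) : ℝ) * Complex.I)).re * s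
      + ((c * Complex.exp ((2 * π * r * (-R) : ℝ) * Complex.I)).re
          + R * (c * (2 * π * r * Complex.I)
              * Complex.exp ((2 * π * r * (-R) : ℝ) * Complex.I)).re) := by
  obtain ⟨hs1, hs2⟩ := hs
  set φ : ℝ → ℝ := fun t => (c * Complex.exp ((2 * π * r * t : ℝ) * Complex.I)).re with hφ
  set φ' : ℝ → ℝ := fun t =>
    (c * (2 * π * r * Complex.I) * Complex.exp ((2 * π * r * t : ℝ) * Complex.I)).re with hφ'
  set φ'' : ℝ → ℝ := fun t =>
    -(4 * π ^ 2 * r ^ 2) * (c * Complex.exp ((2 * π * r * t : ℝ) * Complex.I)).re with hφ''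
  have hg : ∀ t : ℝ, HasDerivAt (fun u : ℝ => c * Complex.exp ((2 * π * r * u : ℝ) * Complex.I))
      (c * (2 * π * r * Complex.I) * Complex.exp ((2 * π * r * t : ℝ) * Complex.I)) t := by
    intro t
    have h1 : HasDerivAt (fun u : ℝ => ((2 * π * r * u : ℝ) * Complex.I : ℂ))
        ((2 * π * r : ℝ) * Complex.I) t := by
      have : HasDerivAt (fun u : ℝ => ((2 * π * r * u : ℝ) : ℂ)) ((2 * π * r : ℝ) : ℂ) t := by
        simpa [Complex.ofRealCLM_apply] using ((Complex.ofRealCLM.hasDerivAt (x := t)).const_mul ((2 * π * r : ℝ) : ℂ)).congr_deriv (by simp [Complex.ofRealCLM_apply])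
      simpa using this.mul_const Complex.I
    have h2 := (h1.cexp).const_mul c
    refine h2.congr_deriv ?_
    push_cast
    ring
  have hd1 : ∀ t : ℝ, HasDerivAt φ (φ' t) t := by
    intro t
    exact (Complex.reCLM.hasFDerivAt.comp_hasDerivAt t (hg t))
  have hd2 : ∀ t : ℝ, HasDerivAt φ' (φ'' t) t := by
    intro t
    have h2 := (Complex.reCLM.hasFDerivAt.comp_hasDerivAt t
      ((hg t).const_mul (2 * (π:ℂ) * r * Complex.I)))
    have hK : (2 * (π:ℂ) * r * Complex.I) * (c * (2 * (π:ℂ) * r * Complex.I)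
        * Complex.exp ((2 * π * r * t : ℝ) * Complex.I))
        = ((-(4 * π ^ 2 * r ^ 2) : ℝ) : ℂ) * (c * Complex.exp ((2 * π * r * t : ℝ) * Complex.I)) := by
      have hI : Complex.I * Complex.I = -1 := Complex.I_mul_I
      push_cast
      ring_nf
      rw [Complex.I_sq]
      ring
    have heq : φ'' t = Complex.reCLM ((2 * (π:ℂ) * r * Complex.I) *
        (c * (2 * (π:ℂ) * r * Complex.I) * Complex.exp ((2 * π * r * t : ℝ) * Complex.I))) := by
      rw [hK]
      simp only [hφ'', Complex.reCLM_apply, Complex.re_ofReal_mul]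
    have hfun : φ' = ⇑Complex.reCLM ∘ fun y =>
        2 * (π:ℂ) * r * Complex.I * (c * Complex.exp ((2 * π * r * y : ℝ) * Complex.I)) := by
      funext y
      simp only [Function.comp_apply, Complex.reCLM_apply, hφ']
      congr 1
      ring
    rw [hfun, heq]
    exact h2
  -- continuity facts
  have hcφ'' : Continuous φ'' := by
    rw [hφ'']
    fun_prop
  -- second derivative identity via FTC
  have key : ∫ t in (-R)..s, φ'' t * (s - t) = φ s - (φ' (-R) * (s + R) + φ (-R)) := by
    have hw : ∀ t ∈ Set.uIcc (-R) s, HasDerivAt (fun u => φ' u * (s - u) + φ u)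
        (φ'' t * (s - t)) t := by
      intro t _
      have h1 := ((hd2 t).mul ((hasDerivAt_id t).const_sub s)).add (hd1 t)
      refine h1.congr_deriv ?_
      simp only [id_eq]
      ring
    have := intervalIntegral.integral_eq_sub_of_hasDerivAt hw
      (((hcφ''.mul (continuous_const.sub continuous_id)).intervalIntegrable _ _))
    rw [this]
    ring_nf
  have hsplit : ∫ t in (-R)..R, φ'' t * max 0 (s - t)
      = ∫ t in (-R)..s, φ'' t * (s - t) := by
    have hint1 : IntervalIntegrable (fun t => φ'' t * max 0 (s - t)) volume (-R) s :=
      (hcφ''.mul (continuous_const.max (continuous_const.sub continuous_id))).intervalIntegrable _ _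
    have hint2 : IntervalIntegrable (fun t => φ'' t * max 0 (s - t)) volume s R :=
      (hcφ''.mul (continuous_const.max (continuous_const.sub continuous_id))).intervalIntegrable _ _
    rw [← intervalIntegral.integral_add_adjacent_intervals hint1 hint2]
    have e2 : ∫ t in s..R, φ'' t * max 0 (s - t) = 0 := by
      rw [intervalIntegral.integral_congr (g := fun _ => (0:ℝ)) ?_]
      · simp
      · intro t ht
        rw [Set.uIcc_of_le hs2] at ht
        have : s - t ≤ 0 := by linarith [ht.1]
        simp [max_eq_left this]
    have e1 : ∫ t in (-R)..s, φ'' t * max 0 (s - t) = ∫ t in (-R)..s, φ'' t * (s - t) := by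
      apply intervalIntegral.integral_congr
      intro t ht
      rw [Set.uIcc_of_le hs1] at ht
      have : 0 ≤ s - t := by linarith [ht.2]
      simp [max_eq_right this]
    rw [e1, e2, add_zero]
  have : ∫ t in (-R)..R, φ'' t * max 0 (s - t) = φ s - (φ' (-R) * (s + R) + φ (-R)) := by
    rw [hsplit, key]
  show φ s = (∫ t in (-R)..R, φ'' t * max 0 (s - t)) + φ' (-R) * s + (φ (-R) + R * φ' (-R))
  rw [this]
  ring

open MeasureTheory Real Set Metric

variable {F : Type*} [NormedAddCommGroup F] [NormedSpace ℝ F] [CompleteSpace F]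

lemma integral_volumeIoiPow (m : ℕ) (G : ℝ → F) :
    ∫ y : Set.Ioi (0:ℝ), G y ∂(MeasureTheory.Measure.volumeIoiPow m)
      = ∫ r in Set.Ioi (0:ℝ), r ^ m • G r := by
  simp only [Measure.volumeIoiPow, ENNReal.ofReal]
  rw [integral_withDensity_eq_integral_smul
    ((measurable_subtype_coe.pow_const _).real_toNNReal),
    integral_subtype_comap measurableSet_Ioi fun a ↦ Real.toNNReal (a ^ m) • G a,
    setIntegral_congr_fun measurableSet_Ioi fun x hx ↦ ?_]
  rw [NNReal.smul_def, Real.coe_toNNReal _ (pow_nonneg (le_of_lt hx) _)]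

lemma polar_integral_s14 {n : ℕ} (hn : 1 ≤ n) (g : EuclideanSpace ℝ (Fin n) → F)
    (hg : Integrable g) :
    ∫ x, g x = ∫ α : Metric.sphere (0 : EuclideanSpace ℝ (Fin n)) 1,
      (∫ r in Set.Ioi (0:ℝ), r ^ (n - 1) • g (r • (α : EuclideanSpace ℝ (Fin n))))
      ∂((volume : Measure (EuclideanSpace ℝ (Fin n))).toSphere) := by
  haveI : Nontrivial (EuclideanSpace ℝ (Fin n)) := by
    have : 0 < Module.finrank ℝ ((EuclideanSpace ℝ (Fin n))) := by
      rw [finrank_euclideanSpace_fin]; omega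
    exact Module.nontrivial_of_finrank_pos this
  have hdim : Module.finrank ℝ (EuclideanSpace ℝ (Fin n)) = n := finrank_euclideanSpace_fin
  set μ : Measure (EuclideanSpace ℝ (Fin n)) := volume
  set F' : Metric.sphere (0:(EuclideanSpace ℝ (Fin n))) 1 × Set.Ioi (0:ℝ) → F := fun p => g ((p.2 : ℝ) • (p.1 : (EuclideanSpace ℝ (Fin n))))
  have hcomp : ∀ x : ({0}ᶜ : Set (EuclideanSpace ℝ (Fin n))), F' (homeomorphUnitSphereProd (EuclideanSpace ℝ (Fin n)) x) = g x := by
    intro x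
    simp only [F', homeomorphUnitSphereProd_apply_fst_coe, homeomorphUnitSphereProd_apply_snd_coe]
    rw [smul_inv_smul₀ (norm_ne_zero_iff.2 x.2)]
  have h0 : ∫ x, g x ∂μ = ∫ x : ({0}ᶜ : Set (EuclideanSpace ℝ (Fin n))), g x ∂(μ.comap Subtype.val) := by
    rw [integral_subtype_comap (measurableSet_singleton _).compl fun x ↦ g x,
      MeasureTheory.restrict_compl_singleton]
  have hmp := μ.measurePreserving_homeomorphUnitSphereProd
  have h1 : ∫ x : ({0}ᶜ : Set (EuclideanSpace ℝ (Fin n))), g x ∂(μ.comap Subtype.val)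
      = ∫ p, F' p ∂(μ.toSphere.prod (Measure.volumeIoiPow (Module.finrank ℝ (EuclideanSpace ℝ (Fin n)) - 1))) := by
    rw [← hmp.integral_comp (Homeomorph.measurableEmbedding _) F']
    exact integral_congr_ae (Filter.Eventually.of_forall (fun x => (hcomp x).symm))
  have hFi : Integrable F' (μ.toSphere.prod (Measure.volumeIoiPow (Module.finrank ℝ (EuclideanSpace ℝ (Fin n)) - 1))) := by
    rw [← hmp.integrable_comp_emb (Homeomorph.measurableEmbedding _)]
    have : (F' ∘ (homeomorphUnitSphereProd (EuclideanSpace ℝ (Fin n)))) = fun x : ({0}ᶜ : Set (EuclideanSpace ℝ (Fin n))) => g x := funext hcomp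
    rw [this]
    have hcm : MeasurableSet ({0}ᶜ : Set (EuclideanSpace ℝ (Fin n))) := (measurableSet_singleton (0:(EuclideanSpace ℝ (Fin n)))).compl
    rw [show (fun x : ({0}ᶜ : Set (EuclideanSpace ℝ (Fin n))) => g ↑x) = g ∘ Subtype.val from rfl,
      ← (MeasurableEmbedding.subtype_coe hcm).integrable_map_iff, map_comap_subtype_coe hcm]
    exact hg.integrableOn
  rw [h0, h1, integral_prod _ hFi]
  rw [hdim]
  congr 1
  funext α
  exact integral_volumeIoiPow (n-1) (fun r => g (r • (α : (EuclideanSpace ℝ (Fin n)))))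

open MeasureTheory Real Set

lemma contOn_pow_div (m k : ℕ) : ContinuousOn (fun r : ℝ => r ^ m / (1 + r ^ k)) (Ici 0) := by
  apply ContinuousOn.div ((continuous_pow m).continuousOn)
    ((continuous_const.add (continuous_pow k)).continuousOn)
  intro r hr
  have := pow_nonneg (mem_Ici.1 hr) k
  intro h; simp only [Pi.add_apply] at h; linarith [h]

lemma pow_div_le_on_Ioi (m k : ℕ) (hk : m + 2 ≤ k) {r : ℝ} (hr : r ∈ Ioi (1:ℝ)) :
    r ^ m / (1 + r ^ k) ≤ r ^ (-2:ℝ) := by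
  have hr1 : (1:ℝ) ≤ r := le_of_lt hr
  have hr0 : (0:ℝ) < r := lt_of_lt_of_le one_pos hr1
  have h2 : r ^ (-2:ℝ) = 1 / r ^ (2:ℕ) := by
    rw [rpow_neg hr0.le, ← rpow_natCast r 2]
    norm_num
  rw [h2, div_le_div_iff₀ (by positivity) (by positivity)]
  have : r ^ m * r ^ 2 = r ^ (m + 2) := by rw [pow_add]
  rw [this]
  have h3 : r ^ (m + 2) ≤ r ^ k := pow_le_pow_right₀ hr1 hk
  nlinarith [pow_nonneg hr0.le k, pow_nonneg hr0.le (m+2)]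

lemma integrableOn_pow_div (m k : ℕ) (hk : m + 2 ≤ k) :
    IntegrableOn (fun r : ℝ => r ^ m / (1 + r ^ k)) (Ioi (0:ℝ)) := by
  rw [← Set.Ioc_union_Ioi_eq_Ioi (zero_le_one)]
  apply IntegrableOn.union
  · exact (((contOn_pow_div m k).mono Icc_subset_Ici_self).integrableOn_compact
      isCompact_Icc).mono_set Ioc_subset_Icc_self
  · have hw : IntegrableOn (fun r : ℝ => r ^ (-2:ℝ)) (Ioi 1) volume :=
      integrableOn_Ioi_rpow_of_lt (by norm_num) one_pos
    apply Integrable.mono' hw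
    · exact (((contOn_pow_div m k).mono (fun x (hx : x ∈ Ioi (1:ℝ)) => mem_Ici.2 <| le_of_lt (lt_of_lt_of_le one_pos
        (le_of_lt hx)))).aestronglyMeasurable measurableSet_Ioi)
    · filter_upwards [ae_restrict_mem measurableSet_Ioi] with r hr
      have h0 : (0:ℝ) < r := lt_of_lt_of_le one_pos (le_of_lt hr)
      rw [Real.norm_eq_abs, abs_of_nonneg (by positivity)]
      exact pow_div_le_on_Ioi m k hk hr

lemma integral_pow_div_le (m k : ℕ) (hk : m + 2 ≤ k) :
    ∫ r in Ioi (0:ℝ), r ^ m / (1 + r ^ k) ≤ 2 := by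
  have I1 : IntegrableOn (fun r : ℝ => r ^ m / (1 + r ^ k)) (Ioc (0:ℝ) 1) :=
    (((contOn_pow_div m k).mono Icc_subset_Ici_self).integrableOn_compact
      isCompact_Icc).mono_set Ioc_subset_Icc_self
  have I2 : IntegrableOn (fun r : ℝ => r ^ m / (1 + r ^ k)) (Ioi (1:ℝ)) :=
    ((integrableOn_pow_div m k hk).mono_set (fun x hx => mem_Ioi.2 (lt_trans one_pos hx)))
  have hw : IntegrableOn (fun r : ℝ => r ^ (-2:ℝ)) (Ioi 1) volume :=
    integrableOn_Ioi_rpow_of_lt (by norm_num) one_pos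
  rw [← Set.Ioc_union_Ioi_eq_Ioi (zero_le_one),
    setIntegral_union (Set.Ioc_disjoint_Ioi le_rfl) measurableSet_Ioi I1 I2]
  have b1 : ∫ r in Ioc (0:ℝ) 1, r ^ m / (1 + r ^ k) ≤ 1 := by
    have : ∫ r in Ioc (0:ℝ) 1, r ^ m / (1 + r ^ k) ≤ ∫ _ in Ioc (0:ℝ) 1, (1:ℝ) := by
      apply setIntegral_mono_on I1 (integrableOn_const (by simp) (by simp)) measurableSet_Ioc
      intro r hr
      rw [div_le_one (by nlinarith [pow_nonneg hr.1.le k])]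
      have : r ^ m ≤ 1 := pow_le_one₀ hr.1.le hr.2
      nlinarith [pow_nonneg hr.1.le k]
    simpa using this
  have b2 : ∫ r in Ioi (1:ℝ), r ^ m / (1 + r ^ k) ≤ 1 := by
    have h1 : ∫ r in Ioi (1:ℝ), r ^ m / (1 + r ^ k) ≤ ∫ r in Ioi (1:ℝ), r ^ (-2:ℝ) := by
      apply setIntegral_mono_on I2 hw measurableSet_Ioi
      exact fun r hr => pow_div_le_on_Ioi m k hk hr
    have h2 : ∫ r in Ioi (1:ℝ), r ^ (-2:ℝ) = 1 := by
      rw [integral_Ioi_rpow_of_lt (by norm_num) one_pos]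
      norm_num
    linarith
  linarith


lemma one_add_pow_le (k : ℕ) {a : ℝ} (ha : 0 ≤ a) : (1 + a) ^ k ≤ 2 ^ k * (1 + a ^ k) := by
  have h1 : (1 + a) ≤ 2 * max 1 a := by
    rcases le_total a 1 with h | h
    · have := le_max_left (1:ℝ) a; linarith
    · have := le_max_right (1:ℝ) a; linarith
  calc (1 + a) ^ k ≤ (2 * max 1 a) ^ k := by
        apply pow_le_pow_left₀ (by positivity) h1
    _ = 2 ^ k * (max 1 a) ^ k := mul_pow 2 _ k
    _ ≤ 2 ^ k * (1 + a ^ k) := by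
        apply mul_le_mul_of_nonneg_left _ (by positivity)
        rcases le_total a 1 with h | h
        · rw [max_eq_left h, one_pow]
          have : (0:ℝ) ≤ a ^ k := by positivity
          linarith
        · rw [max_eq_right h]
          linarith

set_option maxHeartbeats 1000000 in
/-- Corollary: under the Fourier-decay smoothness condition `|f̂(ω)|(1+‖ω‖^k) ≤ ρ`, `k ≥ n+3`,
the ReLU integral representation holds with `sup_{(α,t) ∈ S^{n-1}×[−R,R]} |h(α,t) q(α)| ≤ 8π²ρ`. -/
theorem relu_integral_representation_smooth
    (n k : ℕ) (hn : 1 ≤ n) (hk : n + 3 ≤ k) (ρ : ℝ) (hρ : 0 < ρ)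
    (R : ℝ) (hR : 0 < R)
    (f : EuclideanSpace ℝ (Fin n) → ℝ) (hcont : Continuous f) (hfint : Integrable f)
    (fhat : EuclideanSpace ℝ (Fin n) → ℂ)
    (hfhat : fhat = FourierTransform.fourier (fun x => (f x : ℂ)))
    (hsmooth : ∀ ω, ‖fhat ω‖ * (1 + ‖ω‖ ^ k) ≤ ρ)
    (Z : ℝ) (hZ : Z = ∫ ω, ‖fhat ω‖ * ‖(2 * π) • ω‖ ^ 2) (hZpos : 0 < Z)
    (p : EuclideanSpace ℝ (Fin n) → ℝ) (hp : p = fun ω => ‖fhat ω‖ * ‖(2 * π) • ω‖ ^ 2 / Z)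
    (q : Metric.sphere (0 : EuclideanSpace ℝ (Fin n)) 1 → ℝ)
    (hq : q = fun α => ∫ r in Set.Ioi (0:ℝ), p (r • Subtype.val α) * r ^ (n - 1)) :
    ∃ (h : Metric.sphere (0 : EuclideanSpace ℝ (Fin n)) 1 → ℝ → ℝ)
      (a : EuclideanSpace ℝ (Fin n)) (b : ℝ),
      (∀ α t, t ∈ Set.Icc (-R) R → |h α t * q α| ≤ 8 * π ^ 2 * ρ) ∧
      ∀ x : EuclideanSpace ℝ (Fin n), ‖x‖ ≤ R →
        f x = (∫ α, (∫ t in (-R)..R,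
                h α t * max 0 (⟪(α : EuclideanSpace ℝ (Fin n)), x⟫ - t)) * q α
              ∂(volume : Measure (EuclideanSpace ℝ (Fin n))).toSphere)
            + ⟪a, x⟫ + b := by
  classical
  -- abbreviations
  set μS := (volume : Measure (EuclideanSpace ℝ (Fin n))).toSphere with hμS
  have hnorm_α : ∀ α : (Metric.sphere (0 : EuclideanSpace ℝ (Fin n)) 1), ‖(α : EuclideanSpace ℝ (Fin n))‖ = 1 := fun α =>
    mem_sphere_zero_iff_norm.1 α.2
  -- basic facts about fhat
  have hfhat_cont : Continuous fhat := by
    rw [hfhat]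
    exact VectorFourier.fourierIntegral_continuous Real.continuous_fourierChar
      (innerSL ℝ).continuous₂ (hfint.ofReal)
  have hfhat_bd : ∀ ω, ‖fhat ω‖ ≤ ρ / (1 + ‖ω‖ ^ k) := by
    intro ω
    have h1 : (0:ℝ) < 1 + ‖ω‖ ^ k := by positivity
    rw [le_div_iff₀ h1]
    exact hsmooth ω
  have hfhat_int : Integrable fhat := by
    have hik : ((Module.finrank ℝ (EuclideanSpace ℝ (Fin n)) : ℝ)) < (k : ℝ) := by
      rw [finrank_euclideanSpace_fin]
      exact_mod_cast by omega
    apply Integrable.mono' ((integrable_one_add_norm hik).const_mul (ρ * 2 ^ k))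
      hfhat_cont.aestronglyMeasurable
    apply Filter.Eventually.of_forall
    intro ω
    have h1 : (0:ℝ) < 1 + ‖ω‖ ^ k := by positivity
    have h2 : (0:ℝ) < (1 + ‖ω‖) ^ (k:ℝ) := by positivity
    rw [show ((1 + ‖ω‖) : ℝ) ^ (-(k:ℝ)) = ((1 + ‖ω‖) ^ k)⁻¹ by
      rw [Real.rpow_neg (by positivity), Real.rpow_natCast]]
    have h4 : (1 + ‖ω‖) ^ k ≤ 2 ^ k * (1 + ‖ω‖ ^ k) := one_add_pow_le k (norm_nonneg ω)
    calc ‖fhat ω‖ ≤ ρ / (1 + ‖ω‖ ^ k) := hfhat_bd ω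
      _ ≤ ρ * 2 ^ k * ((1 + ‖ω‖) ^ k)⁻¹ := by
          rw [div_eq_mul_inv]
          have h5 : (0:ℝ) < (1 + ‖ω‖) ^ k := by positivity
          rw [mul_assoc]
          apply mul_le_mul_of_nonneg_left _ hρ.le
          rw [← div_eq_mul_inv, ← one_div, div_le_div_iff₀ h1 h5, one_mul]
          nlinarith [h4]
  -- Fourier inversion
  have hinv : ∀ x : EuclideanSpace ℝ (Fin n), (f x : ℂ) = ∫ ω, 𝐞 ⟪ω, x⟫ • fhat ω := by
    intro x
    have hfc : Continuous fun y => (f y : ℂ) := Complex.continuous_ofReal.comp hcont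
    have h1 := hfc.fourierInv_fourier_eq hfint.ofReal (by rw [← hfhat]; exact hfhat_int)
    calc (f x : ℂ) = 𝓕⁻ (𝓕 fun y => (f y:ℂ)) x :=
          (congrFun h1 x).symm
      _ = 𝓕⁻ fhat x := by rw [← hfhat]
      _ = ∫ ω, 𝐞 ⟪ω, x⟫ • fhat ω := Real.fourierInv_eq fhat x
  -- the profile functions
  set c : (Metric.sphere (0 : EuclideanSpace ℝ (Fin n)) 1) → ℝ → ℂ := fun α r => fhat (r • (α : EuclideanSpace ℝ (Fin n))) with hc
  have hc_cont : Continuous (fun p : (Metric.sphere (0 : EuclideanSpace ℝ (Fin n)) 1) × ℝ => c p.1 p.2) := by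
    apply hfhat_cont.comp
    exact (continuous_snd.smul (continuous_subtype_val.comp continuous_fst))
  have hc_bd : ∀ (α : (Metric.sphere (0 : EuclideanSpace ℝ (Fin n)) 1)) (r : ℝ), 0 ≤ r → ‖c α r‖ ≤ ρ / (1 + r ^ k) := by
    intro α r hr
    have : ‖r • (α : EuclideanSpace ℝ (Fin n))‖ = r := by
      rw [norm_smul, hnorm_α α, Real.norm_eq_abs, abs_of_nonneg hr, mul_one]
    simpa [this] using hfhat_bd (r • (α : EuclideanSpace ℝ (Fin n)))
  set ψ : (Metric.sphere (0 : EuclideanSpace ℝ (Fin n)) 1) → ℝ → ℝ → ℝ := fun α r t =>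
    -(4 * π ^ 2 * r ^ 2) * (c α r * Complex.exp ((2 * π * r * t : ℝ) * Complex.I)).re with hψ
  have hψ_cont : Continuous (fun p : (Metric.sphere (0 : EuclideanSpace ℝ (Fin n)) 1) × ℝ × ℝ => ψ p.1 p.2.1 p.2.2) := by
    have h1 : Continuous (fun p : (Metric.sphere (0 : EuclideanSpace ℝ (Fin n)) 1) × ℝ × ℝ => c p.1 p.2.1) :=
      hc_cont.comp (continuous_fst.prodMk (continuous_fst.comp continuous_snd))
    have h2 : Continuous (fun p : (Metric.sphere (0 : EuclideanSpace ℝ (Fin n)) 1) × ℝ × ℝ =>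
        Complex.exp ((2 * π * p.2.1 * p.2.2 : ℝ) * Complex.I)) := by
      apply Complex.continuous_exp.comp
      apply Continuous.mul _ continuous_const
      exact Complex.continuous_ofReal.comp (by fun_prop)
    have h3 : Continuous (fun p : (Metric.sphere (0 : EuclideanSpace ℝ (Fin n)) 1) × ℝ × ℝ =>
        -(4 * π ^ 2 * p.2.1 ^ 2)) := by fun_prop
    exact h3.mul (Complex.continuous_re.comp (h1.mul h2))
  have hψ_bd : ∀ (α : (Metric.sphere (0 : EuclideanSpace ℝ (Fin n)) 1)) (r t : ℝ), |ψ α r t| ≤ 4 * π ^ 2 * r ^ 2 * ‖c α r‖ := by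
    intro α r t
    have h1 : |(c α r * Complex.exp ((2 * π * r * t : ℝ) * Complex.I)).re|
        ≤ ‖c α r‖ := by
      calc |(c α r * Complex.exp ((2 * π * r * t : ℝ) * Complex.I)).re|
          ≤ ‖c α r * Complex.exp ((2 * π * r * t : ℝ) * Complex.I)‖ := Complex.abs_re_le_norm _
        _ = ‖c α r‖ := by
            rw [norm_mul, Complex.norm_exp_ofReal_mul_I, mul_one]
    have h2 : (0:ℝ) ≤ 4 * π ^ 2 * r ^ 2 := by positivity
    calc |ψ α r t| = 4 * π ^ 2 * r ^ 2 * |(c α r * Complex.exp ((2 * π * r * t : ℝ) * Complex.I)).re| := by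
          rw [hψ]
          rw [abs_mul, abs_neg, abs_of_nonneg h2]
      _ ≤ 4 * π ^ 2 * r ^ 2 * ‖c α r‖ := mul_le_mul_of_nonneg_left h1 h2
  set H : (Metric.sphere (0 : EuclideanSpace ℝ (Fin n)) 1) → ℝ → ℝ := fun α t => ∫ r in Set.Ioi (0:ℝ), ψ α r t * r ^ (n - 1) with hH
  -- the master bound function
  have hDint : ∀ m : ℕ, m + 2 ≤ k →
      Integrable (fun r : ℝ => r ^ m / (1 + r ^ k)) (volume.restrict (Set.Ioi 0)) :=
    fun m hm => integrableOn_pow_div m k hm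
  have hpow21 : ∀ r : ℝ, r ^ 2 * r ^ (n - 1) = r ^ (n + 1) := fun r => by
    rw [← pow_add]; congr 1; omega
  have hpow11 : ∀ r : ℝ, r * r ^ (n - 1) = r ^ n := fun r => by
    nth_rewrite 1 [← pow_one r]
    rw [← pow_add]; congr 1; omega
  have hψ_rint_bd : ∀ (α : (Metric.sphere (0 : EuclideanSpace ℝ (Fin n)) 1)) (r : ℝ), 0 < r → ∀ t,
      |ψ α r t * r ^ (n - 1)| ≤ 4 * π ^ 2 * ρ * (r ^ (n + 1) / (1 + r ^ k)) := by
    intro α r hr t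
    have hrn : (0:ℝ) ≤ r ^ (n-1) := pow_nonneg hr.le _
    have hcb := hc_bd α r hr.le
    calc |ψ α r t * r ^ (n - 1)| = |ψ α r t| * r ^ (n-1) := by
          rw [abs_mul, abs_of_nonneg hrn]
      _ ≤ (4 * π ^ 2 * r ^ 2 * ‖c α r‖) * r ^ (n-1) :=
          mul_le_mul_of_nonneg_right (hψ_bd α r t) hrn
      _ ≤ (4 * π ^ 2 * r ^ 2 * (ρ / (1 + r ^ k))) * r ^ (n-1) := by gcongr
      _ = 4 * π ^ 2 * ρ * ((r ^ 2 * r ^ (n-1)) / (1 + r ^ k)) := by ring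
      _ = 4 * π ^ 2 * ρ * (r ^ (n + 1) / (1 + r ^ k)) := by rw [hpow21 r]
  have hψr_cont : ∀ (α : (Metric.sphere (0 : EuclideanSpace ℝ (Fin n)) 1)) (t : ℝ),
      Continuous (fun r => ψ α r t * r ^ (n - 1)) := by
    intro α t
    exact (hψ_cont.comp (continuous_const.prodMk
      (continuous_id.prodMk continuous_const))).mul (continuous_pow _)
  have hψr_int : ∀ (α : (Metric.sphere (0 : EuclideanSpace ℝ (Fin n)) 1)) (t : ℝ), Integrable (fun r => ψ α r t * r ^ (n - 1))
      (volume.restrict (Set.Ioi 0)) := by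
    intro α t
    apply Integrable.mono' ((hDint (n+1) (by omega)).const_mul (4 * π ^ 2 * ρ))
      (hψr_cont α t).aestronglyMeasurable
    filter_upwards [ae_restrict_mem measurableSet_Ioi] with r hr
    rw [Real.norm_eq_abs]
    exact hψ_rint_bd α r hr t
  have hH_bd : ∀ (α : (Metric.sphere (0 : EuclideanSpace ℝ (Fin n)) 1)) (t : ℝ), |H α t| ≤ 8 * π ^ 2 * ρ := by
    intro α t
    rw [← Real.norm_eq_abs]
    calc ‖H α t‖ ≤ ∫ r in Set.Ioi (0:ℝ), 4 * π ^ 2 * ρ * (r ^ (n + 1) / (1 + r ^ k)) := by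
          apply norm_integral_le_of_norm_le ((hDint (n+1) (by omega)).const_mul (4 * π ^ 2 * ρ))
          filter_upwards [ae_restrict_mem measurableSet_Ioi] with r hr
          rw [Real.norm_eq_abs]
          exact hψ_rint_bd α r hr t
      _ = 4 * π ^ 2 * ρ * ∫ r in Set.Ioi (0:ℝ), r ^ (n + 1) / (1 + r ^ k) :=
          integral_const_mul _ _
      _ ≤ 4 * π ^ 2 * ρ * 2 := by
          apply mul_le_mul_of_nonneg_left (integral_pow_div_le (n+1) k (by omega)) (by positivity)
      _ = 8 * π ^ 2 * ρ := by ring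
  have hH_cont : Continuous (fun p : (Metric.sphere (0 : EuclideanSpace ℝ (Fin n)) 1) × ℝ => H p.1 p.2) := by
    apply continuous_of_dominated (bound := fun r : ℝ => 4 * π ^ 2 * ρ * (r ^ (n + 1) / (1 + r ^ k)))
    · exact fun pp => (hψr_cont pp.1 pp.2).aestronglyMeasurable
    · intro pp
      filter_upwards [ae_restrict_mem measurableSet_Ioi] with r hr
      rw [Real.norm_eq_abs]
      exact hψ_rint_bd pp.1 r hr pp.2
    · exact (hDint (n+1) (by omega)).const_mul _
    · apply Filter.Eventually.of_forall
      intro r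
      exact (hψ_cont.comp (continuous_fst.prodMk
        (continuous_const.prodMk continuous_snd))).mul continuous_const
  -- A and B profiles
  set A : (Metric.sphere (0 : EuclideanSpace ℝ (Fin n)) 1) → ℝ → ℝ := fun α r =>
    (c α r * (2 * π * r * Complex.I) * Complex.exp ((2 * π * r * (-R) : ℝ) * Complex.I)).re
    with hA
  set B : (Metric.sphere (0 : EuclideanSpace ℝ (Fin n)) 1) → ℝ → ℝ := fun α r =>
    (c α r * Complex.exp ((2 * π * r * (-R) : ℝ) * Complex.I)).re + R * A α r with hB
  have hKnorm : ∀ r : ℝ, 0 ≤ r → ‖(2 * (π:ℂ) * r * Complex.I)‖ = 2 * π * r := by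
    intro r hr
    have : (2 * (π:ℂ) * r * Complex.I) = ((2 * π * r : ℝ) : ℂ) * Complex.I := by push_cast; ring
    rw [this, norm_mul, Complex.norm_I, mul_one, Complex.norm_real, Real.norm_eq_abs,
      abs_of_nonneg (by positivity)]
  have hA_bd : ∀ (α : (Metric.sphere (0 : EuclideanSpace ℝ (Fin n)) 1)) (r : ℝ), 0 ≤ r → |A α r| ≤ 2 * π * r * ‖c α r‖ := by
    intro α r hr
    calc |A α r| ≤ ‖c α r * (2 * (π:ℂ) * r * Complex.I)
        * Complex.exp ((2 * π * r * (-R) : ℝ) * Complex.I)‖ := Complex.abs_re_le_norm _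
      _ = ‖c α r‖ * (2 * π * r) := by
          rw [norm_mul, Complex.norm_exp_ofReal_mul_I, mul_one, norm_mul, hKnorm r hr]
      _ = 2 * π * r * ‖c α r‖ := by ring
  have hB_bd : ∀ (α : (Metric.sphere (0 : EuclideanSpace ℝ (Fin n)) 1)) (r : ℝ), 0 ≤ r → |B α r| ≤ ‖c α r‖ + R * (2 * π * r * ‖c α r‖) := by
    intro α r hr
    have h1 : |(c α r * Complex.exp ((2 * π * r * (-R) : ℝ) * Complex.I)).re| ≤ ‖c α r‖ := by
      calc |(c α r * Complex.exp ((2 * π * r * (-R) : ℝ) * Complex.I)).re|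
          ≤ ‖c α r * Complex.exp ((2 * π * r * (-R) : ℝ) * Complex.I)‖ := Complex.abs_re_le_norm _
        _ = ‖c α r‖ := by rw [norm_mul, Complex.norm_exp_ofReal_mul_I, mul_one]
    calc |B α r| ≤ |(c α r * Complex.exp ((2 * π * r * (-R) : ℝ) * Complex.I)).re|
          + |R * A α r| := abs_add_le _ _
      _ ≤ ‖c α r‖ + R * (2 * π * r * ‖c α r‖) := by
          apply add_le_add h1
          rw [abs_mul, abs_of_pos hR]
          exact mul_le_mul_of_nonneg_left (hA_bd α r hr) hR.le
  have hA_cont : Continuous (fun p : (Metric.sphere (0 : EuclideanSpace ℝ (Fin n)) 1) × ℝ => A p.1 p.2) := by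
    apply Complex.continuous_re.comp
    apply Continuous.mul
    · exact hc_cont.mul (by
        apply Continuous.mul _ continuous_const
        exact Continuous.mul (by fun_prop) (Complex.continuous_ofReal.comp continuous_snd))
    · exact Complex.continuous_exp.comp
        ((Complex.continuous_ofReal.comp (by fun_prop)).mul continuous_const)
  have hB_cont : Continuous (fun p : (Metric.sphere (0 : EuclideanSpace ℝ (Fin n)) 1) × ℝ => B p.1 p.2) := by
    apply Continuous.add
    · apply Complex.continuous_re.comp
      apply hc_cont.mul
      exact Complex.continuous_exp.comp
        ((Complex.continuous_ofReal.comp (by fun_prop)).mul continuous_const)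
    · exact continuous_const.mul hA_cont
  set A' : (Metric.sphere (0 : EuclideanSpace ℝ (Fin n)) 1) → ℝ := fun α => ∫ r in Set.Ioi (0:ℝ), A α r * r ^ (n - 1) with hA'
  set B' : (Metric.sphere (0 : EuclideanSpace ℝ (Fin n)) 1) → ℝ := fun α => ∫ r in Set.Ioi (0:ℝ), B α r * r ^ (n - 1) with hB'
  -- integrability in r of the pieces, for every α
  have hAr_bd : ∀ (α : (Metric.sphere (0 : EuclideanSpace ℝ (Fin n)) 1)) (r : ℝ), 0 < r →
      |A α r * r ^ (n-1)| ≤ 2 * π * ρ * (r ^ n / (1 + r ^ k)) := by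
    intro α r hr
    have hrn : (0:ℝ) ≤ r ^ (n-1) := pow_nonneg hr.le _
    calc |A α r * r ^ (n-1)| = |A α r| * r ^ (n-1) := by rw [abs_mul, abs_of_nonneg hrn]
      _ ≤ (2 * π * r * ‖c α r‖) * r ^ (n-1) :=
          mul_le_mul_of_nonneg_right (hA_bd α r hr.le) hrn
      _ ≤ (2 * π * r * (ρ / (1 + r ^ k))) * r ^ (n-1) := by
          gcongr
          exact hc_bd α r hr.le
      _ = 2 * π * ρ * ((r * r ^ (n-1)) / (1 + r ^ k)) := by ring
      _ = 2 * π * ρ * (r ^ n / (1 + r ^ k)) := by rw [hpow11 r]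
  have hAr_cont : ∀ α : (Metric.sphere (0 : EuclideanSpace ℝ (Fin n)) 1), Continuous (fun r => A α r * r ^ (n - 1)) := fun α =>
    (hA_cont.comp (continuous_const.prodMk continuous_id)).mul (continuous_pow _)
  have hAr_int : ∀ α : (Metric.sphere (0 : EuclideanSpace ℝ (Fin n)) 1), Integrable (fun r => A α r * r ^ (n - 1))
      (volume.restrict (Set.Ioi 0)) := by
    intro α
    apply Integrable.mono' ((hDint n (by omega)).const_mul (2 * π * ρ))
      (hAr_cont α).aestronglyMeasurable
    filter_upwards [ae_restrict_mem measurableSet_Ioi] with r hr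
    rw [Real.norm_eq_abs]
    exact hAr_bd α r hr
  have hBr_bd : ∀ (α : (Metric.sphere (0 : EuclideanSpace ℝ (Fin n)) 1)) (r : ℝ), 0 < r →
      |B α r * r ^ (n-1)| ≤ ρ * (r ^ (n-1) / (1 + r ^ k)) + (R * (2 * π * ρ)) * (r ^ n / (1 + r ^ k)) := by
    intro α r hr
    have hrn : (0:ℝ) ≤ r ^ (n-1) := pow_nonneg hr.le _
    have hcb := hc_bd α r hr.le
    calc |B α r * r ^ (n-1)| = |B α r| * r ^ (n-1) := by rw [abs_mul, abs_of_nonneg hrn]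
      _ ≤ (‖c α r‖ + R * (2 * π * r * ‖c α r‖)) * r ^ (n-1) :=
          mul_le_mul_of_nonneg_right (hB_bd α r hr.le) hrn
      _ ≤ ((ρ / (1 + r ^ k)) + R * (2 * π * r * (ρ / (1 + r ^ k)))) * r ^ (n-1) := by
          gcongr
      _ = ρ * (r ^ (n-1) / (1 + r ^ k)) + (R * (2 * π * ρ)) * ((r * r ^ (n-1)) / (1 + r ^ k)) := by
          ring
      _ = ρ * (r ^ (n-1) / (1 + r ^ k)) + (R * (2 * π * ρ)) * (r ^ n / (1 + r ^ k)) := by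
          rw [hpow11 r]
  have hBr_cont : ∀ α : (Metric.sphere (0 : EuclideanSpace ℝ (Fin n)) 1), Continuous (fun r => B α r * r ^ (n - 1)) := fun α =>
    (hB_cont.comp (continuous_const.prodMk continuous_id)).mul (continuous_pow _)
  have hBr_intbound : Integrable (fun r : ℝ =>
      ρ * (r ^ (n-1) / (1 + r ^ k)) + (R * (2 * π * ρ)) * (r ^ n / (1 + r ^ k)))
      (volume.restrict (Set.Ioi 0)) :=
    ((hDint (n-1) (by omega)).const_mul ρ).add ((hDint n (by omega)).const_mul _)
  have hBr_int : ∀ α : (Metric.sphere (0 : EuclideanSpace ℝ (Fin n)) 1), Integrable (fun r => B α r * r ^ (n - 1))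
      (volume.restrict (Set.Ioi 0)) := by
    intro α
    apply Integrable.mono' hBr_intbound (hBr_cont α).aestronglyMeasurable
    filter_upwards [ae_restrict_mem measurableSet_Ioi] with r hr
    rw [Real.norm_eq_abs]
    exact hBr_bd α r hr
  have hA'_cont : Continuous A' := by
    apply continuous_of_dominated (bound := fun r : ℝ => 2 * π * ρ * (r ^ n / (1 + r ^ k)))
    · exact fun α => (hAr_cont α).aestronglyMeasurable
    · intro α
      filter_upwards [ae_restrict_mem measurableSet_Ioi] with r hr
      rw [Real.norm_eq_abs]
      exact hAr_bd α r hr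
    · exact (hDint n (by omega)).const_mul _
    · apply Filter.Eventually.of_forall
      intro r
      exact (hA_cont.comp (continuous_id.prodMk continuous_const)).mul continuous_const
  have hB'_cont : Continuous B' := by
    apply continuous_of_dominated (bound := fun r : ℝ =>
      ρ * (r ^ (n-1) / (1 + r ^ k)) + (R * (2 * π * ρ)) * (r ^ n / (1 + r ^ k)))
    · exact fun α => (hBr_cont α).aestronglyMeasurable
    · intro α
      filter_upwards [ae_restrict_mem measurableSet_Ioi] with r hr
      rw [Real.norm_eq_abs]
      exact hBr_bd α r hr
    · exact hBr_intbound
    · apply Filter.Eventually.of_forall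
      intro r
      exact (hB_cont.comp (continuous_id.prodMk continuous_const)).mul continuous_const
  have hA'_bd : ∀ α, |A' α| ≤ 2 * π * ρ * 2 := by
    intro α
    rw [← Real.norm_eq_abs]
    calc ‖A' α‖ ≤ ∫ r in Set.Ioi (0:ℝ), 2 * π * ρ * (r ^ n / (1 + r ^ k)) := by
          apply norm_integral_le_of_norm_le ((hDint n (by omega)).const_mul _)
          filter_upwards [ae_restrict_mem measurableSet_Ioi] with r hr
          rw [Real.norm_eq_abs]
          exact hAr_bd α r hr
      _ = 2 * π * ρ * ∫ r in Set.Ioi (0:ℝ), r ^ n / (1 + r ^ k) := integral_const_mul _ _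
      _ ≤ 2 * π * ρ * 2 :=
          mul_le_mul_of_nonneg_left (integral_pow_div_le n k (by omega)) (by positivity)
  have hB'_bd : ∀ α, |B' α| ≤ ρ * 2 + R * (2 * π * ρ * 2) := by
    intro α
    rw [← Real.norm_eq_abs]
    calc ‖B' α‖ ≤ ∫ r in Set.Ioi (0:ℝ),
          (ρ * (r ^ (n-1) / (1 + r ^ k)) + (R * (2 * π * ρ)) * (r ^ n / (1 + r ^ k))) := by
          apply norm_integral_le_of_norm_le hBr_intbound
          filter_upwards [ae_restrict_mem measurableSet_Ioi] with r hr
          rw [Real.norm_eq_abs]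
          exact hBr_bd α r hr
      _ = ρ * (∫ r in Set.Ioi (0:ℝ), r ^ (n-1) / (1 + r ^ k))
          + (R * (2 * π * ρ)) * ∫ r in Set.Ioi (0:ℝ), r ^ n / (1 + r ^ k) := by
          rw [integral_add ((hDint (n-1) (by omega)).const_mul ρ) ((hDint n (by omega)).const_mul _),
            integral_const_mul, integral_const_mul]
      _ ≤ ρ * 2 + (R * (2 * π * ρ)) * 2 := by
          apply add_le_add
          · exact mul_le_mul_of_nonneg_left (integral_pow_div_le (n-1) k (by omega)) hρ.le
          · exact mul_le_mul_of_nonneg_left (integral_pow_div_le n k (by omega)) (by positivity)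
      _ = ρ * 2 + R * (2 * π * ρ * 2) := by ring
  -- q α = 0 forces H α t = 0
  have hq_zero : ∀ α : (Metric.sphere (0 : EuclideanSpace ℝ (Fin n)) 1), q α = 0 → ∀ t, H α t = 0 := by
    intro α hqα t
    have hsm : ∀ r : ℝ, 0 < r → ‖(2 * π) • (r • (α : EuclideanSpace ℝ (Fin n)))‖ = 2 * π * r := by
      intro r hrpos
      rw [norm_smul, norm_smul, hnorm_α α, Real.norm_eq_abs, Real.norm_eq_abs,
        abs_of_pos Real.two_pi_pos, abs_of_pos hrpos, mul_one]
    have hscont : Continuous (fun r : ℝ => r • (α : EuclideanSpace ℝ (Fin n))) := by fun_prop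
    have hpcont : Continuous (fun r : ℝ => p (r • (α : EuclideanSpace ℝ (Fin n))) * r ^ (n-1)) := by
      rw [hp]
      fun_prop
    have hpbd : ∀ r : ℝ, 0 < r → |p (r • (α : EuclideanSpace ℝ (Fin n))) * r ^ (n-1)|
        ≤ (4 * π ^ 2 * ρ / Z) * (r ^ (n+1) / (1 + r ^ k)) := by
      intro r hrpos
      have hrn : (0:ℝ) ≤ r ^ (n-1) := pow_nonneg hrpos.le _
      have hcb := hc_bd α r hrpos.le
      rw [hp]
      simp only
      rw [hsm r hrpos, abs_mul, abs_of_nonneg hrn, abs_div, abs_of_pos hZpos,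
        abs_mul, abs_of_nonneg (norm_nonneg _), abs_of_nonneg (by positivity : (0:ℝ) ≤ (2*π*r)^2)]
      calc ‖fhat (r • (α : EuclideanSpace ℝ (Fin n)))‖ * (2*π*r)^2 / Z * r ^ (n-1)
          ≤ (ρ / (1 + r ^ k)) * (2*π*r)^2 / Z * r ^ (n-1) := by gcongr
        _ = (4 * π ^ 2 * ρ / Z) * ((r ^ 2 * r ^ (n-1)) / (1 + r ^ k)) := by ring
        _ = (4 * π ^ 2 * ρ / Z) * (r ^ (n+1) / (1 + r ^ k)) := by rw [hpow21 r]
    have hq_int : Integrable (fun r => p (r • (α : EuclideanSpace ℝ (Fin n))) * r ^ (n-1))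
        (volume.restrict (Set.Ioi 0)) := by
      apply Integrable.mono' ((hDint (n+1) (by omega)).const_mul (4 * π ^ 2 * ρ / Z))
        hpcont.aestronglyMeasurable
      filter_upwards [ae_restrict_mem measurableSet_Ioi] with r hr
      rw [Real.norm_eq_abs]
      exact hpbd r hr
    have hnn : 0 ≤ᵐ[volume.restrict (Set.Ioi 0)]
        (fun r => p (r • (α : EuclideanSpace ℝ (Fin n))) * r ^ (n-1)) := by
      filter_upwards [ae_restrict_mem measurableSet_Ioi] with r hr
      apply mul_nonneg _ (pow_nonneg (le_of_lt hr) _)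
      rw [hp]
      exact div_nonneg (mul_nonneg (norm_nonneg _) (by positivity)) hZpos.le
    have h0 : (fun r => p (r • (α : EuclideanSpace ℝ (Fin n))) * r ^ (n-1))
        =ᵐ[volume.restrict (Set.Ioi 0)] 0 := by
      apply (integral_eq_zero_iff_of_nonneg_ae hnn hq_int).1
      rw [hq] at hqα
      exact hqα
    show (∫ r in Set.Ioi (0:ℝ), ψ α r t * r ^ (n - 1)) = 0
    apply integral_eq_zero_of_ae
    filter_upwards [h0, ae_restrict_mem measurableSet_Ioi] with r h0r hrpos
    simp only [Pi.zero_apply] at h0r ⊢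
    have hcz : ‖c α r‖ * r ^ (n-1) = 0 := by
      rw [hp] at h0r
      simp only at h0r
      rw [hsm r hrpos] at h0r
      have hfact : ‖fhat (r • (α : EuclideanSpace ℝ (Fin n)))‖ * r ^ (n-1) * ((2*π*r)^2 / Z) = 0 := by
        rw [← h0r]; ring
      have hpos2 : 0 < (2*π*r)^2 / Z :=
        div_pos (pow_pos (mul_pos Real.two_pi_pos hrpos) 2) hZpos
      exact (mul_eq_zero.1 hfact).resolve_right (ne_of_gt hpos2)
    have hb : |ψ α r t * r ^ (n-1)| ≤ 4 * π ^ 2 * r ^ 2 * (‖c α r‖ * r ^ (n-1)) := by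
      rw [abs_mul, abs_of_nonneg (pow_nonneg hrpos.le (n-1) : (0:ℝ) ≤ r ^ (n-1))]
      calc |ψ α r t| * r ^ (n-1) ≤ (4 * π ^ 2 * r ^ 2 * ‖c α r‖) * r ^ (n-1) :=
            mul_le_mul_of_nonneg_right (hψ_bd α r t) (pow_nonneg hrpos.le _)
        _ = 4 * π ^ 2 * r ^ 2 * (‖c α r‖ * r ^ (n-1)) := by ring
    rw [hcz, mul_zero] at hb
    exact abs_eq_zero.1 (le_antisymm hb (abs_nonneg _))
  -- definition of h, a, b
  set h : (Metric.sphere (0 : EuclideanSpace ℝ (Fin n)) 1) → ℝ → ℝ := fun α t => if q α = 0 then 0 else H α t / q α with hdefh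
  have hHq : ∀ (α : (Metric.sphere (0 : EuclideanSpace ℝ (Fin n)) 1)) (t : ℝ), h α t * q α = H α t := by
    intro α t
    by_cases h0 : q α = 0
    · simp [hdefh, h0, hq_zero α h0 t]
    · simp only [hdefh, h0, if_false]
      exact div_mul_cancel₀ _ h0
  set a : EuclideanSpace ℝ (Fin n) := ∫ α, A' α • (α : EuclideanSpace ℝ (Fin n)) ∂μS with ha
  set b : ℝ := ∫ α, B' α ∂μS with hb
  refine ⟨h, a, b, ?_, ?_⟩
  · intro α t _
    rw [hHq]
    exact hH_bd α t
  · intro x hx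
    have hsx : ∀ α : (Metric.sphere (0 : EuclideanSpace ℝ (Fin n)) 1),
        ⟪(α : EuclideanSpace ℝ (Fin n)), x⟫ ∈ Set.Icc (-R) R := by
      intro α
      have h1 : |⟪(α : EuclideanSpace ℝ (Fin n)), x⟫| ≤ R := by
        calc |⟪(α : EuclideanSpace ℝ (Fin n)), x⟫|
            ≤ ‖(α : EuclideanSpace ℝ (Fin n))‖ * ‖x‖ := abs_real_inner_le_norm _ _
          _ = ‖x‖ := by rw [hnorm_α α, one_mul]
          _ ≤ R := hx
      exact Set.mem_Icc.2 (abs_le.1 h1)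
    set gx : EuclideanSpace ℝ (Fin n) → ℝ := fun ω => ((𝐞 ⟪ω, x⟫) • fhat ω : ℂ).re with hgx
    have hsmul_cont : Continuous (fun ω : EuclideanSpace ℝ (Fin n) => ((𝐞 ⟪ω, x⟫) • fhat ω : ℂ)) := by
      apply Continuous.smul _ hfhat_cont
      exact continuous_subtype_val.comp (Real.continuous_fourierChar.comp (continuous_id.inner continuous_const))
    have hgC_int : Integrable (fun ω => ((𝐞 ⟪ω, x⟫) • fhat ω : ℂ)) := by
      apply Integrable.mono' hfhat_int.norm hsmul_cont.aestronglyMeasurable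
      exact Filter.Eventually.of_forall fun ω => le_of_eq (Circle.norm_smul _ _)
    have hfx : f x = ∫ ω, gx ω := by
      have h2 := ContinuousLinearMap.integral_comp_comm Complex.reCLM hgC_int
      calc f x = ((f x : ℂ)).re := (Complex.ofReal_re _).symm
        _ = (∫ ω, 𝐞 ⟪ω, x⟫ • fhat ω).re := by rw [← hinv x]
        _ = ∫ ω, gx ω := by
              have h3 : (∫ ω, 𝐞 ⟪ω, x⟫ • fhat ω).re
                  = Complex.reCLM (∫ ω, 𝐞 ⟪ω, x⟫ • fhat ω) := rfl
              rw [h3, ← h2]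
              rfl
    have hgx_int : Integrable gx := by
      apply Integrable.mono' hfhat_int.norm
        (Complex.continuous_re.comp hsmul_cont).aestronglyMeasurable
      apply Filter.Eventually.of_forall
      intro ω
      rw [Real.norm_eq_abs]
      calc |((𝐞 ⟪ω, x⟫) • fhat ω : ℂ).re| ≤ ‖((𝐞 ⟪ω, x⟫) • fhat ω : ℂ)‖ := Complex.abs_re_le_norm _
        _ = ‖fhat ω‖ := Circle.norm_smul _ _
    have hpolar := polar_integral_s14 hn gx hgx_int
    set Mx : (Metric.sphere (0 : EuclideanSpace ℝ (Fin n)) 1) → ℝ := fun α =>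
      ∫ t in (-R)..R, H α t * max 0 (⟪(α : EuclideanSpace ℝ (Fin n)), x⟫ - t) with hMx
    have hRR : -R ≤ R := by linarith
    -- pointwise representation over the sphere
    have hper : ∀ α : (Metric.sphere (0 : EuclideanSpace ℝ (Fin n)) 1),
        (∫ r in Set.Ioi (0:ℝ), r ^ (n-1) • gx (r • (α : EuclideanSpace ℝ (Fin n))))
        = Mx α + A' α * ⟪(α : EuclideanSpace ℝ (Fin n)), x⟫ + B' α := by
      intro α
      set s' := ⟪(α : EuclideanSpace ℝ (Fin n)), x⟫ with hs'
      have hptw : ∀ r ∈ Set.Ioi (0:ℝ), r ^ (n-1) • gx (r • (α : EuclideanSpace ℝ (Fin n)))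
          = ((∫ t in (-R)..R, ψ α r t * max 0 (s' - t)) * r ^ (n-1)
            + (A α r * r ^ (n-1)) * s') + B α r * r ^ (n-1) := by
        intro r hr
        have hin : ⟪r • (α : EuclideanSpace ℝ (Fin n)), x⟫ = r * s' :=
          real_inner_smul_left _ _ _
        have hgxv : gx (r • (α : EuclideanSpace ℝ (Fin n)))
            = (c α r * Complex.exp ((2 * π * r * s' : ℝ) * Complex.I)).re := by
          show ((𝐞 ⟪r • (α : EuclideanSpace ℝ (Fin n)), x⟫)
            • fhat (r • (α : EuclideanSpace ℝ (Fin n))) : ℂ).re = _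
          rw [hin, Circle.smul_def, Real.fourierChar_apply]
          rw [show (2 * π * (r * s')) = 2 * π * r * s' by ring]
          congr 1
          rw [smul_eq_mul]
          ring
        rw [hgxv, taylor_relu (c α r) r R s' hR (hsx α), smul_eq_mul]
        ring
      rw [setIntegral_congr_fun measurableSet_Ioi hptw]
      -- integrability of the T-piece
      have hT_cont : Continuous (fun r : ℝ =>
          (∫ t in (-R)..R, ψ α r t * max 0 (s' - t)) * r ^ (n-1)) := by
        apply Continuous.mul _ (continuous_pow _)
        apply intervalIntegral.continuous_parametric_intervalIntegral_of_continuous'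
        exact (hψ_cont.comp (continuous_const.prodMk
          (continuous_fst.prodMk continuous_snd))).mul
          (continuous_const.max (continuous_const.sub continuous_snd))
      have hT_bd : ∀ r : ℝ, 0 < r →
          |(∫ t in (-R)..R, ψ α r t * max 0 (s' - t)) * r ^ (n-1)|
          ≤ (4 * π ^ 2 * ρ * (2*R) * (2*R)) * (r ^ (n+1) / (1 + r ^ k)) := by
        intro r hr
        have h1 : ∀ t ∈ Set.uIoc (-R) R, ‖ψ α r t * max 0 (s' - t)‖
            ≤ 4 * π ^ 2 * r ^ 2 * ‖c α r‖ * (2*R) := by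
          intro t ht
          rw [Set.uIoc_of_le hRR] at ht
          rw [Real.norm_eq_abs, abs_mul]
          apply mul_le_mul (hψ_bd α r t) _ (abs_nonneg _) (by positivity)
          rw [abs_of_nonneg (le_max_left _ _)]
          have hs1 := (hsx α).1
          have hs2 := (hsx α).2
          apply max_le (by linarith) (by linarith [ht.1])
        have h2 := intervalIntegral.norm_integral_le_of_norm_le_const h1
        rw [Real.norm_eq_abs] at h2
        have h3 : |R - (-R)| = 2*R := by rw [abs_of_nonneg (by linarith)]; ring
        rw [h3] at h2
        have hrn : (0:ℝ) ≤ r ^ (n-1) := pow_nonneg hr.le _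
        calc |(∫ t in (-R)..R, ψ α r t * max 0 (s' - t)) * r ^ (n-1)|
            = |∫ t in (-R)..R, ψ α r t * max 0 (s' - t)| * r ^ (n-1) := by
              rw [abs_mul, abs_of_nonneg hrn]
          _ ≤ (4 * π ^ 2 * r ^ 2 * ‖c α r‖ * (2*R) * (2*R)) * r ^ (n-1) := by
              apply mul_le_mul_of_nonneg_right _ hrn
              exact h2
          _ ≤ (4 * π ^ 2 * r ^ 2 * (ρ / (1 + r ^ k)) * (2*R) * (2*R)) * r ^ (n-1) := by
              gcongr
              exact hc_bd α r hr.le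
          _ = (4 * π ^ 2 * ρ * (2*R) * (2*R)) * ((r ^ 2 * r ^ (n-1)) / (1 + r ^ k)) := by ring
          _ = (4 * π ^ 2 * ρ * (2*R) * (2*R)) * (r ^ (n+1) / (1 + r ^ k)) := by rw [hpow21 r]
      have hT_int : Integrable (fun r : ℝ =>
          (∫ t in (-R)..R, ψ α r t * max 0 (s' - t)) * r ^ (n-1))
          (volume.restrict (Set.Ioi 0)) := by
        apply Integrable.mono' ((hDint (n+1) (by omega)).const_mul (4 * π ^ 2 * ρ * (2*R) * (2*R)))
          hT_cont.aestronglyMeasurable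
        filter_upwards [ae_restrict_mem measurableSet_Ioi] with r hr
        rw [Real.norm_eq_abs]
        exact hT_bd r hr
      have hTA : Integrable (fun r : ℝ =>
          (∫ t in (-R)..R, ψ α r t * max 0 (s' - t)) * r ^ (n-1)
          + (A α r * r ^ (n-1)) * s') (volume.restrict (Set.Ioi 0)) :=
        hT_int.add ((hAr_int α).mul_const s')
      rw [integral_add hTA (hBr_int α),
        integral_add hT_int ((hAr_int α).mul_const s'), integral_mul_const]
      -- Fubini for the T-piece
      have hswap : (∫ r in Set.Ioi (0:ℝ), (∫ t in (-R)..R, ψ α r t * max 0 (s' - t)) * r ^ (n-1))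
          = Mx α := by
        have h1 : ∀ r ∈ Set.Ioi (0:ℝ), (∫ t in (-R)..R, ψ α r t * max 0 (s' - t)) * r ^ (n-1)
            = ∫ t in Set.Ioc (-R) R, ψ α r t * max 0 (s' - t) * r ^ (n-1) := by
          intro r _
          rw [← intervalIntegral.integral_mul_const, intervalIntegral.integral_of_le hRR]
        rw [setIntegral_congr_fun measurableSet_Ioi h1]
        haveI : IsFiniteMeasure (volume.restrict (Set.Ioc (-R) R)) :=
          ⟨by rw [Measure.restrict_apply_univ]; exact measure_Ioc_lt_top⟩
        have hprodInt : Integrable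
            (Function.uncurry fun r t => ψ α r t * max 0 (s' - t) * r ^ (n-1))
            ((volume.restrict (Set.Ioi 0)).prod (volume.restrict (Set.Ioc (-R) R))) := by
          apply Integrable.mono'
            ((((hDint (n+1) (by omega)).const_mul (4 * π ^ 2 * ρ)).mul_prod
              (integrable_const (2*R))))
          · apply Continuous.aestronglyMeasurable
            exact ((hψ_cont.comp (continuous_const.prodMk
              (continuous_fst.prodMk continuous_snd))).mul
              (continuous_const.max (continuous_const.sub continuous_snd))).mul
              ((continuous_pow _).comp continuous_fst)
          · rw [Measure.prod_restrict]
            filter_upwards [ae_restrict_mem (measurableSet_Ioi.prod measurableSet_Ioc)] with z hz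
            obtain ⟨hz1, hz2⟩ := hz
            rw [Real.norm_eq_abs, Function.uncurry]
            have hs1 := (hsx α).1
            have hs2 := (hsx α).2
            calc |ψ α z.1 z.2 * max 0 (s' - z.2) * z.1 ^ (n-1)|
                = |ψ α z.1 z.2 * z.1 ^ (n-1)| * |max 0 (s' - z.2)| := by
                  rw [← abs_mul]; congr 1; ring
              _ ≤ (4 * π ^ 2 * ρ * (z.1 ^ (n+1) / (1 + z.1 ^ k))) * (2*R) := by
                  have hz0 : (0:ℝ) < z.1 := hz1
                  have hd : (0:ℝ) ≤ 1 + z.1 ^ k := by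
                    have := pow_nonneg hz0.le k; linarith
                  apply mul_le_mul (hψ_rint_bd α z.1 hz1 z.2) _ (abs_nonneg _)
                    (mul_nonneg (by positivity)
                      (div_nonneg (pow_nonneg hz0.le _) hd))
                  rw [abs_of_nonneg (le_max_left _ _)]
                  apply max_le (by linarith) (by linarith [hz2.1])
        have h2 := integral_integral_swap hprodInt
        rw [h2]
        rw [hMx]
        simp only
        rw [intervalIntegral.integral_of_le hRR]
        apply setIntegral_congr_fun measurableSet_Ioc
        intro t _
        show (∫ r in Set.Ioi (0:ℝ), ψ α r t * max 0 (s' - t) * r ^ (n-1))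
            = H α t * max 0 (s' - t)
        have h3 : ∀ r : ℝ, ψ α r t * max 0 (s' - t) * r ^ (n-1)
            = ψ α r t * r ^ (n-1) * max 0 (s' - t) := fun r => by ring
        rw [setIntegral_congr_fun measurableSet_Ioi (fun r _ => h3 r), integral_mul_const]
      rw [hswap]
    -- continuity and bounds at sphere level
    have hMx_cont : Continuous Mx := by
      rw [hMx]
      apply intervalIntegral.continuous_parametric_intervalIntegral_of_continuous'
      apply Continuous.mul (hH_cont.comp (continuous_fst.prodMk continuous_snd))
      apply Continuous.max continuous_const
      exact ((continuous_subtype_val.comp continuous_fst).inner continuous_const).sub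
        continuous_snd
    have hMx_bd : ∀ α, |Mx α| ≤ 8 * π ^ 2 * ρ * (2*R) * (2*R) := by
      intro α
      have h1 : ∀ t ∈ Set.uIoc (-R) R,
          ‖H α t * max 0 (⟪(α : EuclideanSpace ℝ (Fin n)), x⟫ - t)‖ ≤ 8 * π ^ 2 * ρ * (2*R) := by
        intro t ht
        rw [Set.uIoc_of_le hRR] at ht
        rw [Real.norm_eq_abs, abs_mul]
        apply mul_le_mul (hH_bd α t) _ (abs_nonneg _) (by positivity)
        rw [abs_of_nonneg (le_max_left _ _)]
        have hs1 := (hsx α).1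
        have hs2 := (hsx α).2
        apply max_le (by linarith) (by linarith [ht.1])
      have h2 := intervalIntegral.norm_integral_le_of_norm_le_const h1
      rw [Real.norm_eq_abs] at h2
      have h3 : |R - (-R)| = 2*R := by rw [abs_of_nonneg (by linarith)]; ring
      rw [h3] at h2
      rw [← Real.norm_eq_abs]
      exact h2
    have hinner_cont : Continuous (fun α : (Metric.sphere (0 : EuclideanSpace ℝ (Fin n)) 1) =>
        ⟪(α : EuclideanSpace ℝ (Fin n)), x⟫) :=
      continuous_subtype_val.inner continuous_const
    have IM : Integrable Mx μS := by
      apply Integrable.mono' (integrable_const (8 * π ^ 2 * ρ * (2*R) * (2*R)))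
        hMx_cont.aestronglyMeasurable
      apply Filter.Eventually.of_forall
      intro α
      rw [Real.norm_eq_abs]
      exact hMx_bd α
    have IAx : Integrable (fun α => A' α * ⟪(α : EuclideanSpace ℝ (Fin n)), x⟫) μS := by
      apply Integrable.mono' (integrable_const (2 * π * ρ * 2 * R))
        (hA'_cont.mul hinner_cont).aestronglyMeasurable
      apply Filter.Eventually.of_forall
      intro α
      rw [Real.norm_eq_abs, Pi.mul_apply, abs_mul]
      have h1 : |⟪(α : EuclideanSpace ℝ (Fin n)), x⟫| ≤ R := abs_le.2 (Set.mem_Icc.1 (hsx α))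
      exact mul_le_mul (hA'_bd α) h1 (abs_nonneg _) (by positivity)
    have IB : Integrable B' μS := by
      apply Integrable.mono' (integrable_const (ρ * 2 + R * (2 * π * ρ * 2)))
        hB'_cont.aestronglyMeasurable
      apply Filter.Eventually.of_forall
      intro α
      rw [Real.norm_eq_abs]
      exact hB'_bd α
    -- the vector a
    have hIav : Integrable (fun α => A' α • (α : EuclideanSpace ℝ (Fin n))) μS := by
      apply Integrable.mono' (integrable_const (2 * π * ρ * 2))
        (hA'_cont.smul continuous_subtype_val).aestronglyMeasurable
      apply Filter.Eventually.of_forall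
      intro α
      rw [Pi.smul_apply', norm_smul, hnorm_α α, mul_one, Real.norm_eq_abs]
      exact hA'_bd α
    have hpiece2 : (∫ α, A' α * ⟪(α : EuclideanSpace ℝ (Fin n)), x⟫ ∂μS) = ⟪a, x⟫ := by
      have h1 : ∀ α : (Metric.sphere (0 : EuclideanSpace ℝ (Fin n)) 1),
          A' α * ⟪(α : EuclideanSpace ℝ (Fin n)), x⟫
          = ⟪x, A' α • (α : EuclideanSpace ℝ (Fin n))⟫ := by
        intro α
        rw [real_inner_smul_right, real_inner_comm]
      calc (∫ α, A' α * ⟪(α : EuclideanSpace ℝ (Fin n)), x⟫ ∂μS)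
          = ∫ α, ⟪x, A' α • (α : EuclideanSpace ℝ (Fin n))⟫ ∂μS :=
            integral_congr_ae (Filter.Eventually.of_forall h1)
        _ = ⟪x, a⟫ := integral_inner hIav x
        _ = ⟪a, x⟫ := real_inner_comm _ _
    have hpiece1 : (∫ α, Mx α ∂μS)
        = ∫ α, (∫ t in (-R)..R,
            h α t * max 0 (⟪(α : EuclideanSpace ℝ (Fin n)), x⟫ - t)) * q α ∂μS := by
      apply integral_congr_ae
      apply Filter.Eventually.of_forall
      intro α
      have h1 : ∀ t : ℝ, H α t * max 0 (⟪(α : EuclideanSpace ℝ (Fin n)), x⟫ - t)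
          = h α t * max 0 (⟪(α : EuclideanSpace ℝ (Fin n)), x⟫ - t) * q α := by
        intro t
        rw [← hHq α t]
        ring
      rw [hMx]
      simp only
      rw [intervalIntegral.integral_congr (fun t _ => h1 t),
        intervalIntegral.integral_mul_const]
    calc f x = ∫ ω, gx ω := hfx
      _ = ∫ α, (∫ r in Set.Ioi (0:ℝ),
            r ^ (n-1) • gx (r • (α : EuclideanSpace ℝ (Fin n)))) ∂μS := hpolar
      _ = ∫ α, (Mx α + A' α * ⟪(α : EuclideanSpace ℝ (Fin n)), x⟫ + B' α) ∂μS :=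
            integral_congr_ae (Filter.Eventually.of_forall hper)
      _ = (∫ α, Mx α ∂μS) + (∫ α, A' α * ⟪(α : EuclideanSpace ℝ (Fin n)), x⟫ ∂μS)
            + ∫ α, B' α ∂μS := by
            have hMA : Integrable (fun α => Mx α
                + A' α * ⟪(α : EuclideanSpace ℝ (Fin n)), x⟫) μS := IM.add IAx
            rw [integral_add hMA IB, integral_add IM IAx]
      _ = (∫ α, (∫ t in (-R)..R,
            h α t * max 0 (⟪(α : EuclideanSpace ℝ (Fin n)), x⟫ - t)) * q α ∂μS)
            + ⟪a, x⟫ + b := by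
            rw [hpiece1, hpiece2, hb]
end
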